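/- arXiv:1910.08095 — 3 statements merged into one kernel-verified Lean document; each statement's English description precedes it below -/
import Mathlib

section
/- The automorphism group of the Heawood graph has order 336. -/
/-- The Heawood graph `C₁₄` on vertex set `ZMod 14`: distinct vertices `i` and `j` are
adjacent iff `j = i ± 1`, or `i` is even and `j = i + 5`, or `i` is odd and `j = i - 5`
(LCF notation `[5, -5]⁷`). -/
def heawood : SimpleGraph (ZMod 14) where
  Adj i j := i ≠ j ∧ (j = i + 1 ∨ j = i - 1 ∨
    (i.val % 2 = 0 ∧ j = i + 5) ∨ (i.val % 2 = 1 ∧ j = i - 5))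
  symm := by constructor; intro i j h; revert i j; decide
  loopless := by constructor; intro i h; revert i h; decide


instance : DecidableRel heawood.Adj := fun i j =>
  inferInstanceAs (Decidable (i ≠ j ∧ (j = i + 1 ∨ j = i - 1 ∨
    (i.val % 2 = 0 ∧ j = i + 5) ∨ (i.val % 2 = 1 ∧ j = i - 5))))

def heawoodP0 : List (List (Fin 14) × List (Fin 14)) := [
  ([0, 1, 2, 3, 4, 5, 6, 7, 8, 9, 10, 11, 12, 13], [0, 1, 2, 3, 4, 5, 6, 7, 8, 9, 10, 11, 12, 13]),
  ([0, 1, 2, 3, 12, 13, 8, 7, 6, 11, 10, 9, 4, 5], [0, 1, 2, 3, 12, 13, 8, 7, 6, 11, 10, 9, 4, 5]),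
  ([0, 1, 2, 7, 6, 5, 4, 3, 12, 11, 10, 9, 8, 13], [0, 1, 2, 7, 6, 5, 4, 3, 12, 11, 10, 9, 8, 13]),
  ([0, 1, 2, 7, 8, 13, 12, 3, 4, 9, 10, 11, 6, 5], [0, 1, 2, 7, 8, 13, 12, 3, 4, 9, 10, 11, 6, 5]),
  ([0, 1, 10, 9, 4, 5, 6, 11, 12, 3, 2, 7, 8, 13], [0, 1, 10, 9, 4, 5, 6, 11, 12, 3, 2, 7, 8, 13]),
  ([0, 1, 10, 9, 8, 13, 12, 11, 6, 7, 2, 3, 4, 5], [0, 1, 10, 11, 12, 13, 8, 9, 4, 3, 2, 7, 6, 5]),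
  ([0, 1, 10, 11, 6, 5, 4, 9, 8, 7, 2, 3, 12, 13], [0, 1, 10, 11, 6, 5, 4, 9, 8, 7, 2, 3, 12, 13]),
  ([0, 1, 10, 11, 12, 13, 8, 9, 4, 3, 2, 7, 6, 5], [0, 1, 10, 9, 8, 13, 12, 11, 6, 7, 2, 3, 4, 5]),
  ([0, 5, 4, 3, 2, 1, 10, 9, 8, 7, 6, 11, 12, 13], [0, 5, 4, 3, 2, 1, 10, 9, 8, 7, 6, 11, 12, 13]),
  ([0, 5, 4, 3, 12, 13, 8, 9, 10, 11, 6, 7, 2, 1], [0, 13, 12, 3, 2, 1, 10, 11, 6, 7, 8, 9, 4, 5]),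
  ([0, 5, 4, 9, 8, 13, 12, 3, 2, 7, 6, 11, 10, 1], [0, 13, 8, 7, 2, 1, 10, 9, 4, 3, 12, 11, 6, 5]),
  ([0, 5, 4, 9, 10, 1, 2, 3, 12, 11, 6, 7, 8, 13], [0, 5, 6, 7, 2, 1, 10, 11, 12, 3, 4, 9, 8, 13]),
  ([0, 5, 6, 7, 2, 1, 10, 11, 12, 3, 4, 9, 8, 13], [0, 5, 4, 9, 10, 1, 2, 3, 12, 11, 6, 7, 8, 13]),
  ([0, 5, 6, 7, 8, 13, 12, 11, 10, 9, 4, 3, 2, 1], [0, 13, 12, 11, 10, 1, 2, 3, 4, 9, 8, 7, 6, 5]),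
  ([0, 5, 6, 11, 10, 1, 2, 7, 8, 9, 4, 3, 12, 13], [0, 5, 6, 11, 10, 1, 2, 7, 8, 9, 4, 3, 12, 13]),
  ([0, 5, 6, 11, 12, 13, 8, 7, 2, 3, 4, 9, 10, 1], [0, 13, 8, 9, 10, 1, 2, 7, 6, 11, 12, 3, 4, 5]),
  ([0, 13, 8, 7, 2, 1, 10, 9, 4, 3, 12, 11, 6, 5], [0, 5, 4, 9, 8, 13, 12, 3, 2, 7, 6, 11, 10, 1]),
  ([0, 13, 8, 7, 6, 5, 4, 9, 10, 11, 12, 3, 2, 1], [0, 13, 12, 11, 6, 5, 4, 3, 2, 7, 8, 9, 10, 1]),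
  ([0, 13, 8, 9, 4, 5, 6, 7, 2, 3, 12, 11, 10, 1], [0, 13, 8, 9, 4, 5, 6, 7, 2, 3, 12, 11, 10, 1]),
  ([0, 13, 8, 9, 10, 1, 2, 7, 6, 11, 12, 3, 4, 5], [0, 5, 6, 11, 12, 13, 8, 7, 2, 3, 4, 9, 10, 1]),
  ([0, 13, 12, 3, 2, 1, 10, 11, 6, 7, 8, 9, 4, 5], [0, 5, 4, 3, 12, 13, 8, 9, 10, 11, 6, 7, 2, 1]),
  ([0, 13, 12, 3, 4, 5, 6, 11, 10, 9, 8, 7, 2, 1], [0, 13, 12, 3, 4, 5, 6, 11, 10, 9, 8, 7, 2, 1]),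
  ([0, 13, 12, 11, 6, 5, 4, 3, 2, 7, 8, 9, 10, 1], [0, 13, 8, 7, 6, 5, 4, 9, 10, 11, 12, 3, 2, 1]),
  ([0, 13, 12, 11, 10, 1, 2, 3, 4, 9, 8, 7, 6, 5], [0, 5, 6, 7, 8, 13, 12, 11, 10, 9, 4, 3, 2, 1])]

def heawoodP1 : List (List (Fin 14) × List (Fin 14)) := [
  ([1, 0, 5, 4, 3, 2, 7, 6, 11, 12, 13, 8, 9, 10], [1, 0, 5, 4, 3, 2, 7, 6, 11, 12, 13, 8, 9, 10]),
  ([1, 0, 5, 4, 9, 10, 11, 6, 7, 8, 13, 12, 3, 2], [1, 0, 13, 12, 3, 2, 7, 8, 9, 4, 5, 6, 11, 10]),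
  ([1, 0, 5, 6, 7, 2, 3, 4, 9, 8, 13, 12, 11, 10], [1, 0, 5, 6, 7, 2, 3, 4, 9, 8, 13, 12, 11, 10]),
  ([1, 0, 5, 6, 11, 10, 9, 4, 3, 12, 13, 8, 7, 2], [1, 0, 13, 8, 7, 2, 3, 12, 11, 6, 5, 4, 9, 10]),
  ([1, 0, 13, 8, 7, 2, 3, 12, 11, 6, 5, 4, 9, 10], [1, 0, 5, 6, 11, 10, 9, 4, 3, 12, 13, 8, 7, 2]),
  ([1, 0, 13, 8, 9, 10, 11, 12, 3, 4, 5, 6, 7, 2], [1, 0, 13, 8, 9, 10, 11, 12, 3, 4, 5, 6, 7, 2]),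
  ([1, 0, 13, 12, 3, 2, 7, 8, 9, 4, 5, 6, 11, 10], [1, 0, 5, 4, 9, 10, 11, 6, 7, 8, 13, 12, 3, 2]),
  ([1, 0, 13, 12, 11, 10, 9, 8, 7, 6, 5, 4, 3, 2], [1, 0, 13, 12, 11, 10, 9, 8, 7, 6, 5, 4, 3, 2]),
  ([1, 2, 3, 4, 5, 0, 13, 12, 11, 6, 7, 8, 9, 10], [5, 0, 1, 2, 3, 4, 9, 10, 11, 12, 13, 8, 7, 6]),
  ([1, 2, 3, 4, 9, 10, 11, 12, 13, 8, 7, 6, 5, 0], [13, 0, 1, 2, 3, 12, 11, 10, 9, 4, 5, 6, 7, 8]),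
  ([1, 2, 3, 12, 11, 10, 9, 4, 5, 6, 7, 8, 13, 0], [13, 0, 1, 2, 7, 8, 9, 10, 11, 6, 5, 4, 3, 12]),
  ([1, 2, 3, 12, 13, 0, 5, 4, 9, 8, 7, 6, 11, 10], [5, 0, 1, 2, 7, 6, 11, 10, 9, 8, 13, 12, 3, 4]),
  ([1, 2, 7, 6, 5, 0, 13, 8, 9, 4, 3, 12, 11, 10], [5, 0, 1, 10, 9, 4, 3, 2, 7, 8, 13, 12, 11, 6]),
  ([1, 2, 7, 6, 11, 10, 9, 8, 13, 12, 3, 4, 5, 0], [13, 0, 1, 10, 11, 12, 3, 2, 7, 6, 5, 4, 9, 8]),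
  ([1, 2, 7, 8, 9, 10, 11, 6, 5, 4, 3, 12, 13, 0], [13, 0, 1, 10, 9, 8, 7, 2, 3, 4, 5, 6, 11, 12]),
  ([1, 2, 7, 8, 13, 0, 5, 6, 11, 12, 3, 4, 9, 10], [5, 0, 1, 10, 11, 6, 7, 2, 3, 12, 13, 8, 9, 4]),
  ([1, 10, 9, 4, 3, 2, 7, 8, 13, 12, 11, 6, 5, 0], [13, 0, 5, 4, 3, 12, 11, 6, 7, 2, 1, 10, 9, 8]),
  ([1, 10, 9, 4, 5, 0, 13, 8, 7, 6, 11, 12, 3, 2], [5, 0, 13, 12, 3, 4, 9, 8, 7, 2, 1, 10, 11, 6]),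
  ([1, 10, 9, 8, 7, 2, 3, 4, 5, 6, 11, 12, 13, 0], [13, 0, 5, 6, 7, 8, 9, 4, 3, 2, 1, 10, 11, 12]),
  ([1, 10, 9, 8, 13, 0, 5, 4, 3, 12, 11, 6, 7, 2], [5, 0, 13, 8, 7, 6, 11, 12, 3, 2, 1, 10, 9, 4]),
  ([1, 10, 11, 6, 5, 0, 13, 12, 3, 4, 9, 8, 7, 2], [5, 0, 13, 8, 9, 4, 3, 12, 11, 10, 1, 2, 7, 6]),
  ([1, 10, 11, 6, 7, 2, 3, 12, 13, 8, 9, 4, 5, 0], [13, 0, 5, 6, 11, 12, 3, 4, 9, 10, 1, 2, 7, 8]),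
  ([1, 10, 11, 12, 3, 2, 7, 6, 5, 4, 9, 8, 13, 0], [13, 0, 5, 4, 9, 8, 7, 6, 11, 10, 1, 2, 3, 12]),
  ([1, 10, 11, 12, 13, 0, 5, 6, 7, 8, 9, 4, 3, 2], [5, 0, 13, 12, 11, 6, 7, 8, 9, 10, 1, 2, 3, 4])]

def heawoodP2 : List (List (Fin 14) × List (Fin 14)) := [
  ([2, 1, 0, 5, 4, 3, 12, 13, 8, 9, 10, 11, 6, 7], [2, 1, 0, 5, 4, 3, 12, 13, 8, 9, 10, 11, 6, 7]),
  ([2, 1, 0, 5, 6, 7, 8, 13, 12, 11, 10, 9, 4, 3], [2, 1, 0, 13, 12, 3, 4, 5, 6, 11, 10, 9, 8, 7]),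
  ([2, 1, 0, 13, 8, 7, 6, 5, 4, 9, 10, 11, 12, 3], [2, 1, 0, 13, 8, 7, 6, 5, 4, 9, 10, 11, 12, 3]),
  ([2, 1, 0, 13, 12, 3, 4, 5, 6, 11, 10, 9, 8, 7], [2, 1, 0, 5, 6, 7, 8, 13, 12, 11, 10, 9, 4, 3]),
  ([2, 1, 10, 9, 4, 3, 12, 11, 6, 5, 0, 13, 8, 7], [10, 1, 0, 5, 4, 9, 8, 13, 12, 3, 2, 7, 6, 11]),
  ([2, 1, 10, 9, 8, 7, 6, 11, 12, 13, 0, 5, 4, 3], [10, 1, 0, 13, 12, 11, 6, 5, 4, 3, 2, 7, 8, 9]),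
  ([2, 1, 10, 11, 6, 7, 8, 9, 4, 5, 0, 13, 12, 3], [10, 1, 0, 13, 8, 9, 4, 5, 6, 7, 2, 3, 12, 11]),
  ([2, 1, 10, 11, 12, 3, 4, 9, 8, 13, 0, 5, 6, 7], [10, 1, 0, 5, 6, 11, 12, 13, 8, 7, 2, 3, 4, 9]),
  ([2, 3, 4, 5, 0, 1, 10, 9, 8, 13, 12, 11, 6, 7], [4, 5, 0, 1, 2, 3, 12, 13, 8, 7, 6, 11, 10, 9]),
  ([2, 3, 4, 5, 6, 7, 8, 9, 10, 11, 12, 13, 0, 1], [12, 13, 0, 1, 2, 3, 4, 5, 6, 7, 8, 9, 10, 11]),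
  ([2, 3, 4, 9, 8, 7, 6, 5, 0, 13, 12, 11, 10, 1], [8, 13, 0, 1, 2, 7, 6, 5, 4, 3, 12, 11, 10, 9]),
  ([2, 3, 4, 9, 10, 1, 0, 5, 6, 11, 12, 13, 8, 7], [6, 5, 0, 1, 2, 7, 8, 13, 12, 3, 4, 9, 10, 11]),
  ([2, 3, 12, 11, 6, 7, 8, 13, 0, 5, 4, 9, 10, 1], [8, 13, 0, 1, 10, 9, 4, 5, 6, 11, 12, 3, 2, 7]),
  ([2, 3, 12, 11, 10, 1, 0, 13, 8, 9, 4, 5, 6, 7], [6, 5, 0, 1, 10, 11, 12, 13, 8, 9, 4, 3, 2, 7]),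
  ([2, 3, 12, 13, 0, 1, 10, 11, 6, 5, 4, 9, 8, 7], [4, 5, 0, 1, 10, 9, 8, 13, 12, 11, 6, 7, 2, 3]),
  ([2, 3, 12, 13, 8, 7, 6, 11, 10, 9, 4, 5, 0, 1], [12, 13, 0, 1, 10, 11, 6, 5, 4, 9, 8, 7, 2, 3]),
  ([2, 7, 6, 5, 0, 1, 10, 11, 12, 13, 8, 9, 4, 3], [4, 5, 0, 13, 12, 3, 2, 1, 10, 11, 6, 7, 8, 9]),
  ([2, 7, 6, 5, 4, 3, 12, 11, 10, 9, 8, 13, 0, 1], [12, 13, 0, 5, 4, 3, 2, 1, 10, 9, 8, 7, 6, 11]),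
  ([2, 7, 6, 11, 10, 1, 0, 5, 4, 9, 8, 13, 12, 3], [6, 5, 0, 13, 8, 7, 2, 1, 10, 9, 4, 3, 12, 11]),
  ([2, 7, 6, 11, 12, 3, 4, 5, 0, 13, 8, 9, 10, 1], [8, 13, 0, 5, 6, 7, 2, 1, 10, 11, 12, 3, 4, 9]),
  ([2, 7, 8, 9, 4, 3, 12, 13, 0, 5, 6, 11, 10, 1], [8, 13, 0, 5, 4, 9, 10, 1, 2, 3, 12, 11, 6, 7]),
  ([2, 7, 8, 9, 10, 1, 0, 13, 12, 11, 6, 5, 4, 3], [6, 5, 0, 13, 12, 11, 10, 1, 2, 3, 4, 9, 8, 7]),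
  ([2, 7, 8, 13, 0, 1, 10, 9, 4, 5, 6, 11, 12, 3], [4, 5, 0, 13, 8, 9, 10, 1, 2, 7, 6, 11, 12, 3]),
  ([2, 7, 8, 13, 12, 3, 4, 9, 10, 11, 6, 5, 0, 1], [12, 13, 0, 5, 6, 11, 10, 1, 2, 7, 8, 9, 4, 3])]

def heawoodP3 : List (List (Fin 14) × List (Fin 14)) := [
  ([3, 2, 1, 0, 5, 4, 9, 10, 11, 6, 7, 8, 13, 12], [3, 2, 1, 0, 5, 4, 9, 10, 11, 6, 7, 8, 13, 12]),
  ([3, 2, 1, 0, 13, 12, 11, 10, 9, 8, 7, 6, 5, 4], [3, 2, 1, 0, 13, 12, 11, 10, 9, 8, 7, 6, 5, 4]),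
  ([3, 2, 1, 10, 9, 4, 5, 0, 13, 8, 7, 6, 11, 12], [7, 2, 1, 0, 5, 6, 11, 10, 9, 4, 3, 12, 13, 8]),
  ([3, 2, 1, 10, 11, 12, 13, 0, 5, 6, 7, 8, 9, 4], [7, 2, 1, 0, 13, 8, 9, 10, 11, 12, 3, 4, 5, 6]),
  ([3, 2, 7, 6, 5, 4, 9, 8, 13, 0, 1, 10, 11, 12], [9, 10, 1, 0, 5, 4, 3, 2, 7, 6, 11, 12, 13, 8]),
  ([3, 2, 7, 6, 11, 12, 13, 8, 9, 10, 1, 0, 5, 4], [11, 10, 1, 0, 13, 12, 3, 2, 7, 8, 9, 4, 5, 6]),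
  ([3, 2, 7, 8, 9, 4, 5, 6, 11, 10, 1, 0, 13, 12], [11, 10, 1, 0, 5, 6, 7, 2, 3, 4, 9, 8, 13, 12]),
  ([3, 2, 7, 8, 13, 12, 11, 6, 5, 0, 1, 10, 9, 4], [9, 10, 1, 0, 13, 8, 7, 2, 3, 12, 11, 6, 5, 4]),
  ([3, 4, 5, 0, 1, 2, 7, 6, 11, 10, 9, 8, 13, 12], [3, 4, 5, 0, 1, 2, 7, 6, 11, 10, 9, 8, 13, 12]),
  ([3, 4, 5, 0, 13, 12, 11, 6, 7, 8, 9, 10, 1, 2], [3, 12, 13, 0, 1, 2, 7, 8, 9, 10, 11, 6, 5, 4]),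
  ([3, 4, 5, 6, 7, 2, 1, 0, 13, 8, 9, 10, 11, 12], [7, 6, 5, 0, 1, 2, 3, 4, 9, 10, 11, 12, 13, 8]),
  ([3, 4, 5, 6, 11, 12, 13, 0, 1, 10, 9, 8, 7, 2], [7, 8, 13, 0, 1, 2, 3, 12, 11, 10, 9, 4, 5, 6]),
  ([3, 4, 9, 8, 7, 2, 1, 10, 11, 6, 5, 0, 13, 12], [11, 6, 5, 0, 1, 10, 9, 4, 3, 2, 7, 8, 13, 12]),
  ([3, 4, 9, 8, 13, 12, 11, 10, 1, 0, 5, 6, 7, 2], [9, 8, 13, 0, 1, 10, 11, 12, 3, 2, 7, 6, 5, 4]),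
  ([3, 4, 9, 10, 1, 2, 7, 8, 13, 0, 5, 6, 11, 12], [9, 4, 5, 0, 1, 10, 11, 6, 7, 2, 3, 12, 13, 8]),
  ([3, 4, 9, 10, 11, 12, 13, 8, 7, 6, 5, 0, 1, 2], [11, 12, 13, 0, 1, 10, 9, 8, 7, 2, 3, 4, 5, 6]),
  ([3, 12, 11, 6, 5, 4, 9, 10, 1, 0, 13, 8, 7, 2], [9, 8, 13, 0, 5, 4, 3, 12, 11, 6, 7, 2, 1, 10]),
  ([3, 12, 11, 6, 7, 2, 1, 10, 9, 8, 13, 0, 5, 4], [11, 6, 5, 0, 13, 12, 3, 4, 9, 8, 7, 2, 1, 10]),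
  ([3, 12, 11, 10, 1, 2, 7, 6, 5, 0, 13, 8, 9, 4], [9, 4, 5, 0, 13, 8, 7, 6, 11, 12, 3, 2, 1, 10]),
  ([3, 12, 11, 10, 9, 4, 5, 6, 7, 8, 13, 0, 1, 2], [11, 12, 13, 0, 5, 6, 7, 8, 9, 4, 3, 2, 1, 10]),
  ([3, 12, 13, 0, 1, 2, 7, 8, 9, 10, 11, 6, 5, 4], [3, 4, 5, 0, 13, 12, 11, 6, 7, 8, 9, 10, 1, 2]),
  ([3, 12, 13, 0, 5, 4, 9, 8, 7, 6, 11, 10, 1, 2], [3, 12, 13, 0, 5, 4, 9, 8, 7, 6, 11, 10, 1, 2]),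
  ([3, 12, 13, 8, 7, 2, 1, 0, 5, 6, 11, 10, 9, 4], [7, 6, 5, 0, 13, 8, 9, 4, 3, 12, 11, 10, 1, 2]),
  ([3, 12, 13, 8, 9, 4, 5, 0, 1, 10, 11, 6, 7, 2], [7, 8, 13, 0, 5, 6, 11, 12, 3, 4, 9, 10, 1, 2])]

def heawoodP4 : List (List (Fin 14) × List (Fin 14)) := [
  ([4, 3, 2, 1, 0, 5, 6, 7, 8, 13, 12, 11, 10, 9], [4, 3, 2, 1, 0, 5, 6, 7, 8, 13, 12, 11, 10, 9]),
  ([4, 3, 2, 1, 10, 9, 8, 7, 6, 11, 12, 13, 0, 5], [12, 3, 2, 1, 0, 13, 8, 7, 6, 5, 4, 9, 10, 11]),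
  ([4, 3, 2, 7, 6, 5, 0, 1, 10, 11, 12, 13, 8, 9], [6, 7, 2, 1, 0, 5, 4, 3, 12, 13, 8, 9, 10, 11]),
  ([4, 3, 2, 7, 8, 9, 10, 1, 0, 13, 12, 11, 6, 5], [8, 7, 2, 1, 0, 13, 12, 3, 4, 5, 6, 11, 10, 9]),
  ([4, 3, 12, 11, 6, 5, 0, 13, 8, 7, 2, 1, 10, 9], [6, 11, 10, 1, 0, 5, 4, 9, 8, 13, 12, 3, 2, 7]),
  ([4, 3, 12, 11, 10, 9, 8, 13, 0, 1, 2, 7, 6, 5], [8, 9, 10, 1, 0, 13, 12, 11, 6, 5, 4, 3, 2, 7]),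
  ([4, 3, 12, 13, 0, 5, 6, 11, 10, 1, 2, 7, 8, 9], [4, 9, 10, 1, 0, 5, 6, 11, 12, 13, 8, 7, 2, 3]),
  ([4, 3, 12, 13, 8, 9, 10, 11, 6, 7, 2, 1, 0, 5], [12, 11, 10, 1, 0, 13, 8, 9, 4, 5, 6, 7, 2, 3]),
  ([4, 5, 0, 1, 2, 3, 12, 13, 8, 7, 6, 11, 10, 9], [2, 3, 4, 5, 0, 1, 10, 9, 8, 13, 12, 11, 6, 7]),
  ([4, 5, 0, 1, 10, 9, 8, 13, 12, 11, 6, 7, 2, 3], [2, 3, 12, 13, 0, 1, 10, 11, 6, 5, 4, 9, 8, 7]),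
  ([4, 5, 0, 13, 8, 9, 10, 1, 2, 7, 6, 11, 12, 3], [2, 7, 8, 13, 0, 1, 10, 9, 4, 5, 6, 11, 12, 3]),
  ([4, 5, 0, 13, 12, 3, 2, 1, 10, 11, 6, 7, 8, 9], [2, 7, 6, 5, 0, 1, 10, 11, 12, 13, 8, 9, 4, 3]),
  ([4, 5, 6, 7, 2, 3, 12, 11, 10, 1, 0, 13, 8, 9], [10, 9, 4, 5, 0, 1, 2, 3, 12, 13, 8, 7, 6, 11]),
  ([4, 5, 6, 7, 8, 9, 10, 11, 12, 13, 0, 1, 2, 3], [10, 11, 12, 13, 0, 1, 2, 3, 4, 5, 6, 7, 8, 9]),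
  ([4, 5, 6, 11, 10, 9, 8, 7, 2, 1, 0, 13, 12, 3], [10, 9, 8, 13, 0, 1, 2, 7, 6, 5, 4, 3, 12, 11]),
  ([4, 5, 6, 11, 12, 3, 2, 7, 8, 13, 0, 1, 10, 9], [10, 11, 6, 5, 0, 1, 2, 7, 8, 13, 12, 3, 4, 9]),
  ([4, 9, 8, 7, 2, 3, 12, 13, 0, 1, 10, 11, 6, 5], [8, 9, 4, 5, 0, 13, 12, 3, 2, 1, 10, 11, 6, 7]),
  ([4, 9, 8, 7, 6, 5, 0, 13, 12, 11, 10, 1, 2, 3], [6, 11, 12, 13, 0, 5, 4, 3, 2, 1, 10, 9, 8, 7]),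
  ([4, 9, 8, 13, 0, 5, 6, 7, 2, 1, 10, 11, 12, 3], [4, 9, 8, 13, 0, 5, 6, 7, 2, 1, 10, 11, 12, 3]),
  ([4, 9, 8, 13, 12, 3, 2, 7, 6, 11, 10, 1, 0, 5], [12, 11, 6, 5, 0, 13, 8, 7, 2, 1, 10, 9, 4, 3]),
  ([4, 9, 10, 1, 0, 5, 6, 11, 12, 13, 8, 7, 2, 3], [4, 3, 12, 13, 0, 5, 6, 11, 10, 1, 2, 7, 8, 9]),
  ([4, 9, 10, 1, 2, 3, 12, 11, 6, 7, 8, 13, 0, 5], [12, 3, 4, 5, 0, 13, 8, 9, 10, 1, 2, 7, 6, 11]),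
  ([4, 9, 10, 11, 6, 5, 0, 1, 2, 7, 8, 13, 12, 3], [6, 7, 8, 13, 0, 5, 4, 9, 10, 1, 2, 3, 12, 11]),
  ([4, 9, 10, 11, 12, 3, 2, 1, 0, 13, 8, 7, 6, 5], [8, 7, 6, 5, 0, 13, 12, 11, 10, 1, 2, 3, 4, 9])]

def heawoodP5 : List (List (Fin 14) × List (Fin 14)) := [
  ([5, 0, 1, 2, 3, 4, 9, 10, 11, 12, 13, 8, 7, 6], [1, 2, 3, 4, 5, 0, 13, 12, 11, 6, 7, 8, 9, 10]),
  ([5, 0, 1, 2, 7, 6, 11, 10, 9, 8, 13, 12, 3, 4], [1, 2, 3, 12, 13, 0, 5, 4, 9, 8, 7, 6, 11, 10]),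
  ([5, 0, 1, 10, 9, 4, 3, 2, 7, 8, 13, 12, 11, 6], [1, 2, 7, 6, 5, 0, 13, 8, 9, 4, 3, 12, 11, 10]),
  ([5, 0, 1, 10, 11, 6, 7, 2, 3, 12, 13, 8, 9, 4], [1, 2, 7, 8, 13, 0, 5, 6, 11, 12, 3, 4, 9, 10]),
  ([5, 0, 13, 8, 7, 6, 11, 12, 3, 2, 1, 10, 9, 4], [1, 10, 9, 8, 13, 0, 5, 4, 3, 12, 11, 6, 7, 2]),
  ([5, 0, 13, 8, 9, 4, 3, 12, 11, 10, 1, 2, 7, 6], [1, 10, 11, 6, 5, 0, 13, 12, 3, 4, 9, 8, 7, 2]),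
  ([5, 0, 13, 12, 3, 4, 9, 8, 7, 2, 1, 10, 11, 6], [1, 10, 9, 4, 5, 0, 13, 8, 7, 6, 11, 12, 3, 2]),
  ([5, 0, 13, 12, 11, 6, 7, 8, 9, 10, 1, 2, 3, 4], [1, 10, 11, 12, 13, 0, 5, 6, 7, 8, 9, 4, 3, 2]),
  ([5, 4, 3, 2, 1, 0, 13, 12, 11, 10, 9, 8, 7, 6], [5, 4, 3, 2, 1, 0, 13, 12, 11, 10, 9, 8, 7, 6]),
  ([5, 4, 3, 2, 7, 6, 11, 12, 13, 8, 9, 10, 1, 0], [13, 12, 3, 2, 1, 0, 5, 4, 9, 10, 11, 6, 7, 8]),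
  ([5, 4, 3, 12, 11, 6, 7, 2, 1, 10, 9, 8, 13, 0], [13, 8, 7, 2, 1, 0, 5, 6, 11, 10, 9, 4, 3, 12]),
  ([5, 4, 3, 12, 13, 0, 1, 2, 7, 8, 9, 10, 11, 6], [5, 6, 7, 2, 1, 0, 13, 8, 9, 10, 11, 12, 3, 4]),
  ([5, 4, 9, 8, 7, 6, 11, 10, 1, 2, 3, 12, 13, 0], [13, 8, 9, 10, 1, 0, 5, 4, 3, 2, 7, 6, 11, 12]),
  ([5, 4, 9, 8, 13, 0, 1, 10, 11, 12, 3, 2, 7, 6], [5, 6, 11, 10, 1, 0, 13, 12, 3, 2, 7, 8, 9, 4]),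
  ([5, 4, 9, 10, 1, 0, 13, 8, 7, 2, 3, 12, 11, 6], [5, 4, 9, 10, 1, 0, 13, 8, 7, 2, 3, 12, 11, 6]),
  ([5, 4, 9, 10, 11, 6, 7, 8, 13, 12, 3, 2, 1, 0], [13, 12, 11, 10, 1, 0, 5, 6, 7, 2, 3, 4, 9, 8]),
  ([5, 6, 7, 2, 1, 0, 13, 8, 9, 10, 11, 12, 3, 4], [5, 4, 3, 12, 13, 0, 1, 2, 7, 8, 9, 10, 11, 6]),
  ([5, 6, 7, 2, 3, 4, 9, 8, 13, 12, 11, 10, 1, 0], [13, 12, 3, 4, 5, 0, 1, 2, 7, 6, 11, 10, 9, 8]),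
  ([5, 6, 7, 8, 9, 4, 3, 2, 1, 10, 11, 12, 13, 0], [13, 8, 7, 6, 5, 0, 1, 2, 3, 4, 9, 10, 11, 12]),
  ([5, 6, 7, 8, 13, 0, 1, 2, 3, 12, 11, 10, 9, 4], [5, 6, 7, 8, 13, 0, 1, 2, 3, 12, 11, 10, 9, 4]),
  ([5, 6, 11, 10, 1, 0, 13, 12, 3, 2, 7, 8, 9, 4], [5, 4, 9, 8, 13, 0, 1, 10, 11, 12, 3, 2, 7, 6]),
  ([5, 6, 11, 10, 9, 4, 3, 12, 13, 8, 7, 2, 1, 0], [13, 12, 11, 6, 5, 0, 1, 10, 9, 4, 3, 2, 7, 8]),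
  ([5, 6, 11, 12, 3, 4, 9, 10, 1, 2, 7, 8, 13, 0], [13, 8, 9, 4, 5, 0, 1, 10, 11, 6, 7, 2, 3, 12]),
  ([5, 6, 11, 12, 13, 0, 1, 10, 9, 8, 7, 2, 3, 4], [5, 6, 11, 12, 13, 0, 1, 10, 9, 8, 7, 2, 3, 4])]

def heawoodP6 : List (List (Fin 14) × List (Fin 14)) := [
  ([6, 5, 0, 1, 2, 7, 8, 13, 12, 3, 4, 9, 10, 11], [2, 3, 4, 9, 10, 1, 0, 5, 6, 11, 12, 13, 8, 7]),
  ([6, 5, 0, 1, 10, 11, 12, 13, 8, 9, 4, 3, 2, 7], [2, 3, 12, 11, 10, 1, 0, 13, 8, 9, 4, 5, 6, 7]),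
  ([6, 5, 0, 13, 8, 7, 2, 1, 10, 9, 4, 3, 12, 11], [2, 7, 6, 11, 10, 1, 0, 5, 4, 9, 8, 13, 12, 3]),
  ([6, 5, 0, 13, 12, 11, 10, 1, 2, 3, 4, 9, 8, 7], [2, 7, 8, 9, 10, 1, 0, 13, 12, 11, 6, 5, 4, 3]),
  ([6, 5, 4, 3, 2, 7, 8, 9, 10, 1, 0, 13, 12, 11], [10, 9, 4, 3, 2, 1, 0, 5, 6, 7, 8, 13, 12, 11]),
  ([6, 5, 4, 3, 12, 11, 10, 9, 8, 13, 0, 1, 2, 7], [10, 11, 12, 3, 2, 1, 0, 13, 8, 7, 6, 5, 4, 9]),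
  ([6, 5, 4, 9, 8, 7, 2, 3, 12, 13, 0, 1, 10, 11], [10, 11, 6, 7, 2, 1, 0, 5, 4, 3, 12, 13, 8, 9]),
  ([6, 5, 4, 9, 10, 11, 12, 3, 2, 1, 0, 13, 8, 7], [10, 9, 8, 7, 2, 1, 0, 13, 12, 3, 4, 5, 6, 11]),
  ([6, 7, 2, 1, 0, 5, 4, 3, 12, 13, 8, 9, 10, 11], [4, 3, 2, 7, 6, 5, 0, 1, 10, 11, 12, 13, 8, 9]),
  ([6, 7, 2, 1, 10, 11, 12, 3, 4, 9, 8, 13, 0, 5], [12, 3, 2, 7, 8, 13, 0, 1, 10, 9, 4, 5, 6, 11]),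
  ([6, 7, 2, 3, 4, 5, 0, 1, 10, 9, 8, 13, 12, 11], [6, 7, 2, 3, 4, 5, 0, 1, 10, 9, 8, 13, 12, 11]),
  ([6, 7, 2, 3, 12, 11, 10, 1, 0, 13, 8, 9, 4, 5], [8, 7, 2, 3, 12, 13, 0, 1, 10, 11, 6, 5, 4, 9]),
  ([6, 7, 8, 9, 4, 5, 0, 13, 12, 3, 2, 1, 10, 11], [6, 11, 10, 9, 4, 5, 0, 1, 2, 3, 12, 13, 8, 7]),
  ([6, 7, 8, 9, 10, 11, 12, 13, 0, 1, 2, 3, 4, 5], [8, 9, 10, 11, 12, 13, 0, 1, 2, 3, 4, 5, 6, 7]),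
  ([6, 7, 8, 13, 0, 5, 4, 9, 10, 1, 2, 3, 12, 11], [4, 9, 10, 11, 6, 5, 0, 1, 2, 7, 8, 13, 12, 3]),
  ([6, 7, 8, 13, 12, 11, 10, 9, 4, 3, 2, 1, 0, 5], [12, 11, 10, 9, 8, 13, 0, 1, 2, 7, 6, 5, 4, 3]),
  ([6, 11, 10, 1, 0, 5, 4, 9, 8, 13, 12, 3, 2, 7], [4, 3, 12, 11, 6, 5, 0, 13, 8, 7, 2, 1, 10, 9]),
  ([6, 11, 10, 1, 2, 7, 8, 9, 4, 3, 12, 13, 0, 5], [12, 3, 4, 9, 8, 13, 0, 5, 6, 7, 2, 1, 10, 11]),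
  ([6, 11, 10, 9, 4, 5, 0, 1, 2, 3, 12, 13, 8, 7], [6, 7, 8, 9, 4, 5, 0, 13, 12, 3, 2, 1, 10, 11]),
  ([6, 11, 10, 9, 8, 7, 2, 1, 0, 13, 12, 3, 4, 5], [8, 7, 6, 11, 12, 13, 0, 5, 4, 3, 2, 1, 10, 9]),
  ([6, 11, 12, 3, 2, 7, 8, 13, 0, 1, 10, 9, 4, 5], [8, 9, 4, 3, 12, 13, 0, 5, 6, 11, 10, 1, 2, 7]),
  ([6, 11, 12, 3, 4, 5, 0, 13, 8, 9, 10, 1, 2, 7], [6, 11, 12, 3, 4, 5, 0, 13, 8, 9, 10, 1, 2, 7]),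
  ([6, 11, 12, 13, 0, 5, 4, 3, 2, 1, 10, 9, 8, 7], [4, 9, 8, 7, 6, 5, 0, 13, 12, 11, 10, 1, 2, 3]),
  ([6, 11, 12, 13, 8, 7, 2, 3, 4, 9, 10, 1, 0, 5], [12, 11, 6, 7, 8, 13, 0, 5, 4, 9, 10, 1, 2, 3])]

def heawoodP7 : List (List (Fin 14) × List (Fin 14)) := [
  ([7, 2, 1, 0, 5, 6, 11, 10, 9, 4, 3, 12, 13, 8], [3, 2, 1, 10, 9, 4, 5, 0, 13, 8, 7, 6, 11, 12]),
  ([7, 2, 1, 0, 13, 8, 9, 10, 11, 12, 3, 4, 5, 6], [3, 2, 1, 10, 11, 12, 13, 0, 5, 6, 7, 8, 9, 4]),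
  ([7, 2, 1, 10, 9, 8, 13, 0, 5, 4, 3, 12, 11, 6], [7, 2, 1, 10, 9, 8, 13, 0, 5, 4, 3, 12, 11, 6]),
  ([7, 2, 1, 10, 11, 6, 5, 0, 13, 12, 3, 4, 9, 8], [7, 2, 1, 10, 11, 6, 5, 0, 13, 12, 3, 4, 9, 8]),
  ([7, 2, 3, 4, 5, 6, 11, 12, 13, 0, 1, 10, 9, 8], [9, 10, 1, 2, 3, 4, 5, 0, 13, 12, 11, 6, 7, 8]),
  ([7, 2, 3, 4, 9, 8, 13, 12, 11, 10, 1, 0, 5, 6], [11, 10, 1, 2, 3, 12, 13, 0, 5, 4, 9, 8, 7, 6]),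
  ([7, 2, 3, 12, 11, 6, 5, 4, 9, 10, 1, 0, 13, 8], [11, 10, 1, 2, 7, 6, 5, 0, 13, 8, 9, 4, 3, 12]),
  ([7, 2, 3, 12, 13, 8, 9, 4, 5, 0, 1, 10, 11, 6], [9, 10, 1, 2, 7, 8, 13, 0, 5, 6, 11, 12, 3, 4]),
  ([7, 6, 5, 0, 1, 2, 3, 4, 9, 10, 11, 12, 13, 8], [3, 4, 5, 6, 7, 2, 1, 0, 13, 8, 9, 10, 11, 12]),
  ([7, 6, 5, 0, 13, 8, 9, 4, 3, 12, 11, 10, 1, 2], [3, 12, 13, 8, 7, 2, 1, 0, 5, 6, 11, 10, 9, 4]),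
  ([7, 6, 5, 4, 3, 2, 1, 0, 13, 12, 11, 10, 9, 8], [7, 6, 5, 4, 3, 2, 1, 0, 13, 12, 11, 10, 9, 8]),
  ([7, 6, 5, 4, 9, 8, 13, 0, 1, 10, 11, 12, 3, 2], [7, 8, 13, 12, 3, 2, 1, 0, 5, 4, 9, 10, 11, 6]),
  ([7, 6, 11, 10, 1, 2, 3, 12, 13, 0, 5, 4, 9, 8], [9, 4, 5, 6, 11, 10, 1, 0, 13, 12, 3, 2, 7, 8]),
  ([7, 6, 11, 10, 9, 8, 13, 12, 3, 4, 5, 0, 1, 2], [11, 12, 13, 8, 9, 10, 1, 0, 5, 4, 3, 2, 7, 6]),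
  ([7, 6, 11, 12, 3, 2, 1, 10, 9, 4, 5, 0, 13, 8], [11, 6, 5, 4, 9, 10, 1, 0, 13, 8, 7, 2, 3, 12]),
  ([7, 6, 11, 12, 13, 8, 9, 10, 1, 0, 5, 4, 3, 2], [9, 8, 13, 12, 11, 10, 1, 0, 5, 6, 7, 2, 3, 4]),
  ([7, 8, 9, 4, 3, 2, 1, 10, 11, 12, 13, 0, 5, 6], [11, 6, 5, 4, 3, 12, 13, 0, 1, 2, 7, 8, 9, 10]),
  ([7, 8, 9, 4, 5, 6, 11, 10, 1, 0, 13, 12, 3, 2], [9, 8, 13, 12, 3, 4, 5, 0, 1, 2, 7, 6, 11, 10]),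
  ([7, 8, 9, 10, 1, 2, 3, 4, 5, 0, 13, 12, 11, 6], [9, 4, 5, 6, 7, 8, 13, 0, 1, 2, 3, 12, 11, 10]),
  ([7, 8, 9, 10, 11, 6, 5, 4, 3, 12, 13, 0, 1, 2], [11, 12, 13, 8, 7, 6, 5, 0, 1, 2, 3, 4, 9, 10]),
  ([7, 8, 13, 0, 1, 2, 3, 12, 11, 10, 9, 4, 5, 6], [3, 4, 5, 6, 11, 12, 13, 0, 1, 10, 9, 8, 7, 2]),
  ([7, 8, 13, 0, 5, 6, 11, 12, 3, 4, 9, 10, 1, 2], [3, 12, 13, 8, 9, 4, 5, 0, 1, 10, 11, 6, 7, 2]),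
  ([7, 8, 13, 12, 3, 2, 1, 0, 5, 4, 9, 10, 11, 6], [7, 6, 5, 4, 9, 8, 13, 0, 1, 10, 11, 12, 3, 2]),
  ([7, 8, 13, 12, 11, 6, 5, 0, 1, 10, 9, 4, 3, 2], [7, 8, 13, 12, 11, 6, 5, 0, 1, 10, 9, 4, 3, 2])]

def heawoodP8 : List (List (Fin 14) × List (Fin 14)) := [
  ([8, 7, 2, 1, 0, 13, 12, 3, 4, 5, 6, 11, 10, 9], [4, 3, 2, 7, 8, 9, 10, 1, 0, 13, 12, 11, 6, 5]),
  ([8, 7, 2, 1, 10, 9, 4, 3, 12, 11, 6, 5, 0, 13], [12, 3, 2, 7, 6, 11, 10, 1, 0, 5, 4, 9, 8, 13]),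
  ([8, 7, 2, 3, 4, 9, 10, 1, 0, 5, 6, 11, 12, 13], [8, 7, 2, 3, 4, 9, 10, 1, 0, 5, 6, 11, 12, 13]),
  ([8, 7, 2, 3, 12, 13, 0, 1, 10, 11, 6, 5, 4, 9], [6, 7, 2, 3, 12, 11, 10, 1, 0, 13, 8, 9, 4, 5]),
  ([8, 7, 6, 5, 0, 13, 12, 11, 10, 1, 2, 3, 4, 9], [4, 9, 10, 11, 12, 3, 2, 1, 0, 13, 8, 7, 6, 5]),
  ([8, 7, 6, 5, 4, 9, 10, 11, 12, 3, 2, 1, 0, 13], [12, 11, 10, 9, 4, 3, 2, 1, 0, 5, 6, 7, 8, 13]),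
  ([8, 7, 6, 11, 10, 9, 4, 5, 0, 1, 2, 3, 12, 13], [8, 9, 10, 11, 6, 7, 2, 1, 0, 5, 4, 3, 12, 13]),
  ([8, 7, 6, 11, 12, 13, 0, 5, 4, 3, 2, 1, 10, 9], [6, 11, 10, 9, 8, 7, 2, 1, 0, 13, 12, 3, 4, 5]),
  ([8, 9, 4, 3, 2, 7, 6, 5, 0, 1, 10, 11, 12, 13], [8, 9, 4, 3, 2, 7, 6, 5, 0, 1, 10, 11, 12, 13]),
  ([8, 9, 4, 3, 12, 13, 0, 5, 6, 11, 10, 1, 2, 7], [6, 11, 12, 3, 2, 7, 8, 13, 0, 1, 10, 9, 4, 5]),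
  ([8, 9, 4, 5, 0, 13, 12, 3, 2, 1, 10, 11, 6, 7], [4, 9, 8, 7, 2, 3, 12, 13, 0, 1, 10, 11, 6, 5]),
  ([8, 9, 4, 5, 6, 7, 2, 3, 12, 11, 10, 1, 0, 13], [12, 11, 6, 7, 2, 3, 4, 5, 0, 1, 10, 9, 8, 13]),
  ([8, 9, 10, 1, 0, 13, 12, 11, 6, 5, 4, 3, 2, 7], [4, 3, 12, 11, 10, 9, 8, 13, 0, 1, 2, 7, 6, 5]),
  ([8, 9, 10, 1, 2, 7, 6, 11, 12, 3, 4, 5, 0, 13], [12, 3, 4, 9, 10, 11, 6, 5, 0, 1, 2, 7, 8, 13]),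
  ([8, 9, 10, 11, 6, 7, 2, 1, 0, 5, 4, 3, 12, 13], [8, 7, 6, 11, 10, 9, 4, 5, 0, 1, 2, 3, 12, 13]),
  ([8, 9, 10, 11, 12, 13, 0, 1, 2, 3, 4, 5, 6, 7], [6, 7, 8, 9, 10, 11, 12, 13, 0, 1, 2, 3, 4, 5]),
  ([8, 13, 0, 1, 2, 7, 6, 5, 4, 3, 12, 11, 10, 9], [2, 3, 4, 9, 8, 7, 6, 5, 0, 13, 12, 11, 10, 1]),
  ([8, 13, 0, 1, 10, 9, 4, 5, 6, 11, 12, 3, 2, 7], [2, 3, 12, 11, 6, 7, 8, 13, 0, 5, 4, 9, 10, 1]),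
  ([8, 13, 0, 5, 4, 9, 10, 1, 2, 3, 12, 11, 6, 7], [2, 7, 8, 9, 4, 3, 12, 13, 0, 5, 6, 11, 10, 1]),
  ([8, 13, 0, 5, 6, 7, 2, 1, 10, 11, 12, 3, 4, 9], [2, 7, 6, 11, 12, 3, 4, 5, 0, 13, 8, 9, 10, 1]),
  ([8, 13, 12, 3, 2, 7, 6, 11, 10, 1, 0, 5, 4, 9], [10, 9, 4, 3, 12, 11, 6, 5, 0, 13, 8, 7, 2, 1]),
  ([8, 13, 12, 3, 4, 9, 10, 11, 6, 5, 0, 1, 2, 7], [10, 11, 12, 3, 4, 9, 8, 13, 0, 5, 6, 7, 2, 1]),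
  ([8, 13, 12, 11, 6, 7, 2, 3, 4, 5, 0, 1, 10, 9], [10, 11, 6, 7, 8, 9, 4, 5, 0, 13, 12, 3, 2, 1]),
  ([8, 13, 12, 11, 10, 9, 4, 3, 2, 1, 0, 5, 6, 7], [10, 9, 8, 7, 6, 11, 12, 13, 0, 5, 4, 3, 2, 1])]

def heawoodP9 : List (List (Fin 14) × List (Fin 14)) := [
  ([9, 4, 3, 2, 1, 10, 11, 12, 13, 0, 5, 6, 7, 8], [9, 4, 3, 2, 1, 10, 11, 12, 13, 0, 5, 6, 7, 8]),
  ([9, 4, 3, 2, 7, 8, 13, 12, 11, 6, 5, 0, 1, 10], [11, 12, 3, 2, 1, 10, 9, 4, 5, 0, 13, 8, 7, 6]),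
  ([9, 4, 3, 12, 11, 10, 1, 2, 7, 6, 5, 0, 13, 8], [11, 6, 7, 2, 1, 10, 9, 8, 13, 0, 5, 4, 3, 12]),
  ([9, 4, 3, 12, 13, 8, 7, 2, 1, 0, 5, 6, 11, 10], [9, 8, 7, 2, 1, 10, 11, 6, 5, 0, 13, 12, 3, 4]),
  ([9, 4, 5, 0, 1, 10, 11, 6, 7, 2, 3, 12, 13, 8], [3, 4, 9, 10, 1, 2, 7, 8, 13, 0, 5, 6, 11, 12]),
  ([9, 4, 5, 0, 13, 8, 7, 6, 11, 12, 3, 2, 1, 10], [3, 12, 11, 10, 1, 2, 7, 6, 5, 0, 13, 8, 9, 4]),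
  ([9, 4, 5, 6, 7, 8, 13, 0, 1, 2, 3, 12, 11, 10], [7, 8, 9, 10, 1, 2, 3, 4, 5, 0, 13, 12, 11, 6]),
  ([9, 4, 5, 6, 11, 10, 1, 0, 13, 12, 3, 2, 7, 8], [7, 6, 11, 10, 1, 2, 3, 12, 13, 0, 5, 4, 9, 8]),
  ([9, 8, 7, 2, 1, 10, 11, 6, 5, 0, 13, 12, 3, 4], [9, 4, 3, 12, 13, 8, 7, 2, 1, 0, 5, 6, 11, 10]),
  ([9, 8, 7, 2, 3, 4, 5, 6, 11, 12, 13, 0, 1, 10], [11, 12, 3, 4, 5, 6, 7, 2, 1, 0, 13, 8, 9, 10]),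
  ([9, 8, 7, 6, 5, 4, 3, 2, 1, 0, 13, 12, 11, 10], [9, 8, 7, 6, 5, 4, 3, 2, 1, 0, 13, 12, 11, 10]),
  ([9, 8, 7, 6, 11, 10, 1, 2, 3, 12, 13, 0, 5, 4], [11, 6, 7, 8, 13, 12, 3, 2, 1, 0, 5, 4, 9, 10]),
  ([9, 8, 13, 0, 1, 10, 11, 12, 3, 2, 7, 6, 5, 4], [3, 4, 9, 8, 13, 12, 11, 10, 1, 0, 5, 6, 7, 2]),
  ([9, 8, 13, 0, 5, 4, 3, 12, 11, 6, 7, 2, 1, 10], [3, 12, 11, 6, 5, 4, 9, 10, 1, 0, 13, 8, 7, 2]),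
  ([9, 8, 13, 12, 3, 4, 5, 0, 1, 2, 7, 6, 11, 10], [7, 8, 9, 4, 5, 6, 11, 10, 1, 0, 13, 12, 3, 2]),
  ([9, 8, 13, 12, 11, 10, 1, 0, 5, 6, 7, 2, 3, 4], [7, 6, 11, 12, 13, 8, 9, 10, 1, 0, 5, 4, 3, 2]),
  ([9, 10, 1, 0, 5, 4, 3, 2, 7, 6, 11, 12, 13, 8], [3, 2, 7, 6, 5, 4, 9, 8, 13, 0, 1, 10, 11, 12]),
  ([9, 10, 1, 0, 13, 8, 7, 2, 3, 12, 11, 6, 5, 4], [3, 2, 7, 8, 13, 12, 11, 6, 5, 0, 1, 10, 9, 4]),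
  ([9, 10, 1, 2, 3, 4, 5, 0, 13, 12, 11, 6, 7, 8], [7, 2, 3, 4, 5, 6, 11, 12, 13, 0, 1, 10, 9, 8]),
  ([9, 10, 1, 2, 7, 8, 13, 0, 5, 6, 11, 12, 3, 4], [7, 2, 3, 12, 13, 8, 9, 4, 5, 0, 1, 10, 11, 6]),
  ([9, 10, 11, 6, 5, 4, 3, 12, 13, 0, 1, 2, 7, 8], [9, 10, 11, 6, 5, 4, 3, 12, 13, 0, 1, 2, 7, 8]),
  ([9, 10, 11, 6, 7, 8, 13, 12, 3, 2, 1, 0, 5, 4], [11, 10, 9, 8, 13, 12, 3, 4, 5, 0, 1, 2, 7, 6]),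
  ([9, 10, 11, 12, 3, 4, 5, 6, 7, 2, 1, 0, 13, 8], [11, 10, 9, 4, 5, 6, 7, 8, 13, 0, 1, 2, 3, 12]),
  ([9, 10, 11, 12, 13, 8, 7, 6, 5, 0, 1, 2, 3, 4], [9, 10, 11, 12, 13, 8, 7, 6, 5, 0, 1, 2, 3, 4])]

def heawoodP10 : List (List (Fin 14) × List (Fin 14)) := [
  ([10, 1, 0, 5, 4, 9, 8, 13, 12, 3, 2, 7, 6, 11], [2, 1, 10, 9, 4, 3, 12, 11, 6, 5, 0, 13, 8, 7]),
  ([10, 1, 0, 5, 6, 11, 12, 13, 8, 7, 2, 3, 4, 9], [2, 1, 10, 11, 12, 3, 4, 9, 8, 13, 0, 5, 6, 7]),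
  ([10, 1, 0, 13, 8, 9, 4, 5, 6, 7, 2, 3, 12, 11], [2, 1, 10, 11, 6, 7, 8, 9, 4, 5, 0, 13, 12, 3]),
  ([10, 1, 0, 13, 12, 11, 6, 5, 4, 3, 2, 7, 8, 9], [2, 1, 10, 9, 8, 7, 6, 11, 12, 13, 0, 5, 4, 3]),
  ([10, 1, 2, 3, 4, 9, 8, 7, 6, 5, 0, 13, 12, 11], [10, 1, 2, 3, 4, 9, 8, 7, 6, 5, 0, 13, 12, 11]),
  ([10, 1, 2, 3, 12, 11, 6, 7, 8, 13, 0, 5, 4, 9], [10, 1, 2, 3, 12, 11, 6, 7, 8, 13, 0, 5, 4, 9]),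
  ([10, 1, 2, 7, 6, 11, 12, 3, 4, 5, 0, 13, 8, 9], [10, 1, 2, 7, 8, 9, 4, 3, 12, 13, 0, 5, 6, 11]),
  ([10, 1, 2, 7, 8, 9, 4, 3, 12, 13, 0, 5, 6, 11], [10, 1, 2, 7, 6, 11, 12, 3, 4, 5, 0, 13, 8, 9]),
  ([10, 9, 4, 3, 2, 1, 0, 5, 6, 7, 8, 13, 12, 11], [6, 5, 4, 3, 2, 7, 8, 9, 10, 1, 0, 13, 12, 11]),
  ([10, 9, 4, 3, 12, 11, 6, 5, 0, 13, 8, 7, 2, 1], [8, 13, 12, 3, 2, 7, 6, 11, 10, 1, 0, 5, 4, 9]),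
  ([10, 9, 4, 5, 0, 1, 2, 3, 12, 13, 8, 7, 6, 11], [4, 5, 6, 7, 2, 3, 12, 11, 10, 1, 0, 13, 8, 9]),
  ([10, 9, 4, 5, 6, 11, 12, 3, 2, 7, 8, 13, 0, 1], [12, 13, 8, 7, 2, 3, 4, 9, 10, 1, 0, 5, 6, 11]),
  ([10, 9, 8, 7, 2, 1, 0, 13, 12, 3, 4, 5, 6, 11], [6, 5, 4, 9, 10, 11, 12, 3, 2, 1, 0, 13, 8, 7]),
  ([10, 9, 8, 7, 6, 11, 12, 13, 0, 5, 4, 3, 2, 1], [8, 13, 12, 11, 10, 9, 4, 3, 2, 1, 0, 5, 6, 7]),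
  ([10, 9, 8, 13, 0, 1, 2, 7, 6, 5, 4, 3, 12, 11], [4, 5, 6, 11, 10, 9, 8, 7, 2, 1, 0, 13, 12, 3]),
  ([10, 9, 8, 13, 12, 11, 6, 7, 2, 3, 4, 5, 0, 1], [12, 13, 8, 9, 10, 11, 6, 7, 2, 1, 0, 5, 4, 3]),
  ([10, 11, 6, 5, 0, 1, 2, 7, 8, 13, 12, 3, 4, 9], [4, 5, 6, 11, 12, 3, 2, 7, 8, 13, 0, 1, 10, 9]),
  ([10, 11, 6, 5, 4, 9, 8, 7, 2, 3, 12, 13, 0, 1], [12, 13, 8, 9, 4, 3, 2, 7, 6, 5, 0, 1, 10, 11]),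
  ([10, 11, 6, 7, 2, 1, 0, 5, 4, 3, 12, 13, 8, 9], [6, 5, 4, 9, 8, 7, 2, 3, 12, 13, 0, 1, 10, 11]),
  ([10, 11, 6, 7, 8, 9, 4, 5, 0, 13, 12, 3, 2, 1], [8, 13, 12, 11, 6, 7, 2, 3, 4, 5, 0, 1, 10, 9]),
  ([10, 11, 12, 3, 2, 1, 0, 13, 8, 7, 6, 5, 4, 9], [6, 5, 4, 3, 12, 11, 10, 9, 8, 13, 0, 1, 2, 7]),
  ([10, 11, 12, 3, 4, 9, 8, 13, 0, 5, 6, 7, 2, 1], [8, 13, 12, 3, 4, 9, 10, 11, 6, 5, 0, 1, 2, 7]),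
  ([10, 11, 12, 13, 0, 1, 2, 3, 4, 5, 6, 7, 8, 9], [4, 5, 6, 7, 8, 9, 10, 11, 12, 13, 0, 1, 2, 3]),
  ([10, 11, 12, 13, 8, 9, 4, 3, 2, 7, 6, 5, 0, 1], [12, 13, 8, 7, 6, 11, 10, 9, 4, 5, 0, 1, 2, 3])]

def heawoodP11 : List (List (Fin 14) × List (Fin 14)) := [
  ([11, 6, 5, 0, 1, 10, 9, 4, 3, 2, 7, 8, 13, 12], [3, 4, 9, 8, 7, 2, 1, 10, 11, 6, 5, 0, 13, 12]),
  ([11, 6, 5, 0, 13, 12, 3, 4, 9, 8, 7, 2, 1, 10], [3, 12, 11, 6, 7, 2, 1, 10, 9, 8, 13, 0, 5, 4]),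
  ([11, 6, 5, 4, 3, 12, 13, 0, 1, 2, 7, 8, 9, 10], [7, 8, 9, 4, 3, 2, 1, 10, 11, 12, 13, 0, 5, 6]),
  ([11, 6, 5, 4, 9, 10, 1, 0, 13, 8, 7, 2, 3, 12], [7, 6, 11, 12, 3, 2, 1, 10, 9, 4, 5, 0, 13, 8]),
  ([11, 6, 7, 2, 1, 10, 9, 8, 13, 0, 5, 4, 3, 12], [9, 4, 3, 12, 11, 10, 1, 2, 7, 6, 5, 0, 13, 8]),
  ([11, 6, 7, 2, 3, 12, 13, 8, 9, 4, 5, 0, 1, 10], [11, 12, 3, 4, 9, 10, 1, 2, 7, 8, 13, 0, 5, 6]),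
  ([11, 6, 7, 8, 9, 10, 1, 2, 3, 4, 5, 0, 13, 12], [11, 6, 7, 8, 9, 10, 1, 2, 3, 4, 5, 0, 13, 12]),
  ([11, 6, 7, 8, 13, 12, 3, 2, 1, 0, 5, 4, 9, 10], [9, 8, 7, 6, 11, 10, 1, 2, 3, 12, 13, 0, 5, 4]),
  ([11, 10, 1, 0, 5, 6, 7, 2, 3, 4, 9, 8, 13, 12], [3, 2, 7, 8, 9, 4, 5, 6, 11, 10, 1, 0, 13, 12]),
  ([11, 10, 1, 0, 13, 12, 3, 2, 7, 8, 9, 4, 5, 6], [3, 2, 7, 6, 11, 12, 13, 8, 9, 10, 1, 0, 5, 4]),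
  ([11, 10, 1, 2, 3, 12, 13, 0, 5, 4, 9, 8, 7, 6], [7, 2, 3, 4, 9, 8, 13, 12, 11, 10, 1, 0, 5, 6]),
  ([11, 10, 1, 2, 7, 6, 5, 0, 13, 8, 9, 4, 3, 12], [7, 2, 3, 12, 11, 6, 5, 4, 9, 10, 1, 0, 13, 8]),
  ([11, 10, 9, 4, 3, 12, 13, 8, 7, 2, 1, 0, 5, 6], [11, 10, 9, 4, 3, 12, 13, 8, 7, 2, 1, 0, 5, 6]),
  ([11, 10, 9, 4, 5, 6, 7, 8, 13, 0, 1, 2, 3, 12], [9, 10, 11, 12, 3, 4, 5, 6, 7, 2, 1, 0, 13, 8]),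
  ([11, 10, 9, 8, 7, 6, 5, 4, 3, 2, 1, 0, 13, 12], [11, 10, 9, 8, 7, 6, 5, 4, 3, 2, 1, 0, 13, 12]),
  ([11, 10, 9, 8, 13, 12, 3, 4, 5, 0, 1, 2, 7, 6], [9, 10, 11, 6, 7, 8, 13, 12, 3, 2, 1, 0, 5, 4]),
  ([11, 12, 3, 2, 1, 10, 9, 4, 5, 0, 13, 8, 7, 6], [9, 4, 3, 2, 7, 8, 13, 12, 11, 6, 5, 0, 1, 10]),
  ([11, 12, 3, 2, 7, 6, 5, 4, 9, 8, 13, 0, 1, 10], [11, 12, 3, 2, 7, 6, 5, 4, 9, 8, 13, 0, 1, 10]),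
  ([11, 12, 3, 4, 5, 6, 7, 2, 1, 0, 13, 8, 9, 10], [9, 8, 7, 2, 3, 4, 5, 6, 11, 12, 13, 0, 1, 10]),
  ([11, 12, 3, 4, 9, 10, 1, 2, 7, 8, 13, 0, 5, 6], [11, 6, 7, 2, 3, 12, 13, 8, 9, 4, 5, 0, 1, 10]),
  ([11, 12, 13, 0, 1, 10, 9, 8, 7, 2, 3, 4, 5, 6], [3, 4, 9, 10, 11, 12, 13, 8, 7, 6, 5, 0, 1, 2]),
  ([11, 12, 13, 0, 5, 6, 7, 8, 9, 4, 3, 2, 1, 10], [3, 12, 11, 10, 9, 4, 5, 6, 7, 8, 13, 0, 1, 2]),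
  ([11, 12, 13, 8, 7, 6, 5, 0, 1, 2, 3, 4, 9, 10], [7, 8, 9, 10, 11, 6, 5, 4, 3, 12, 13, 0, 1, 2]),
  ([11, 12, 13, 8, 9, 10, 1, 0, 5, 4, 3, 2, 7, 6], [7, 6, 11, 10, 9, 8, 13, 12, 3, 4, 5, 0, 1, 2])]

def heawoodP12 : List (List (Fin 14) × List (Fin 14)) := [
  ([12, 3, 2, 1, 0, 13, 8, 7, 6, 5, 4, 9, 10, 11], [4, 3, 2, 1, 10, 9, 8, 7, 6, 11, 12, 13, 0, 5]),
  ([12, 3, 2, 1, 10, 11, 6, 7, 8, 9, 4, 5, 0, 13], [12, 3, 2, 1, 10, 11, 6, 7, 8, 9, 4, 5, 0, 13]),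
  ([12, 3, 2, 7, 6, 11, 10, 1, 0, 5, 4, 9, 8, 13], [8, 7, 2, 1, 10, 9, 4, 3, 12, 11, 6, 5, 0, 13]),
  ([12, 3, 2, 7, 8, 13, 0, 1, 10, 9, 4, 5, 6, 11], [6, 7, 2, 1, 10, 11, 12, 3, 4, 9, 8, 13, 0, 5]),
  ([12, 3, 4, 5, 0, 13, 8, 9, 10, 1, 2, 7, 6, 11], [4, 9, 10, 1, 2, 3, 12, 11, 6, 7, 8, 13, 0, 5]),
  ([12, 3, 4, 5, 6, 11, 10, 9, 8, 7, 2, 1, 0, 13], [12, 11, 10, 1, 2, 3, 4, 9, 8, 7, 6, 5, 0, 13]),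
  ([12, 3, 4, 9, 8, 13, 0, 5, 6, 7, 2, 1, 10, 11], [6, 11, 10, 1, 2, 7, 8, 9, 4, 3, 12, 13, 0, 5]),
  ([12, 3, 4, 9, 10, 11, 6, 5, 0, 1, 2, 7, 8, 13], [8, 9, 10, 1, 2, 7, 6, 11, 12, 3, 4, 5, 0, 13]),
  ([12, 11, 6, 5, 0, 13, 8, 7, 2, 1, 10, 9, 4, 3], [4, 9, 8, 13, 12, 3, 2, 7, 6, 11, 10, 1, 0, 5]),
  ([12, 11, 6, 5, 4, 3, 2, 7, 8, 9, 10, 1, 0, 13], [12, 11, 6, 5, 4, 3, 2, 7, 8, 9, 10, 1, 0, 13]),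
  ([12, 11, 6, 7, 2, 3, 4, 5, 0, 1, 10, 9, 8, 13], [8, 9, 4, 5, 6, 7, 2, 3, 12, 11, 10, 1, 0, 13]),
  ([12, 11, 6, 7, 8, 13, 0, 5, 4, 9, 10, 1, 2, 3], [6, 11, 12, 13, 8, 7, 2, 3, 4, 9, 10, 1, 0, 5]),
  ([12, 11, 10, 1, 0, 13, 8, 9, 4, 5, 6, 7, 2, 3], [4, 3, 12, 13, 8, 9, 10, 11, 6, 7, 2, 1, 0, 5]),
  ([12, 11, 10, 1, 2, 3, 4, 9, 8, 7, 6, 5, 0, 13], [12, 3, 4, 5, 6, 11, 10, 9, 8, 7, 2, 1, 0, 13]),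
  ([12, 11, 10, 9, 4, 3, 2, 1, 0, 5, 6, 7, 8, 13], [8, 7, 6, 5, 4, 9, 10, 11, 12, 3, 2, 1, 0, 13]),
  ([12, 11, 10, 9, 8, 13, 0, 1, 2, 7, 6, 5, 4, 3], [6, 7, 8, 13, 12, 11, 10, 9, 4, 3, 2, 1, 0, 5]),
  ([12, 13, 0, 1, 2, 3, 4, 5, 6, 7, 8, 9, 10, 11], [2, 3, 4, 5, 6, 7, 8, 9, 10, 11, 12, 13, 0, 1]),
  ([12, 13, 0, 1, 10, 11, 6, 5, 4, 9, 8, 7, 2, 3], [2, 3, 12, 13, 8, 7, 6, 11, 10, 9, 4, 5, 0, 1]),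
  ([12, 13, 0, 5, 4, 3, 2, 1, 10, 9, 8, 7, 6, 11], [2, 7, 6, 5, 4, 3, 12, 11, 10, 9, 8, 13, 0, 1]),
  ([12, 13, 0, 5, 6, 11, 10, 1, 2, 7, 8, 9, 4, 3], [2, 7, 8, 13, 12, 3, 4, 9, 10, 11, 6, 5, 0, 1]),
  ([12, 13, 8, 7, 2, 3, 4, 9, 10, 1, 0, 5, 6, 11], [10, 9, 4, 5, 6, 11, 12, 3, 2, 7, 8, 13, 0, 1]),
  ([12, 13, 8, 7, 6, 11, 10, 9, 4, 5, 0, 1, 2, 3], [10, 11, 12, 13, 8, 9, 4, 3, 2, 7, 6, 5, 0, 1]),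
  ([12, 13, 8, 9, 4, 3, 2, 7, 6, 5, 0, 1, 10, 11], [10, 11, 6, 5, 4, 9, 8, 7, 2, 3, 12, 13, 0, 1]),
  ([12, 13, 8, 9, 10, 11, 6, 7, 2, 1, 0, 5, 4, 3], [10, 9, 8, 13, 12, 11, 6, 7, 2, 3, 4, 5, 0, 1])]

def heawoodP13 : List (List (Fin 14) × List (Fin 14)) := [
  ([13, 0, 1, 2, 3, 12, 11, 10, 9, 4, 5, 6, 7, 8], [1, 2, 3, 4, 9, 10, 11, 12, 13, 8, 7, 6, 5, 0]),
  ([13, 0, 1, 2, 7, 8, 9, 10, 11, 6, 5, 4, 3, 12], [1, 2, 3, 12, 11, 10, 9, 4, 5, 6, 7, 8, 13, 0]),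
  ([13, 0, 1, 10, 9, 8, 7, 2, 3, 4, 5, 6, 11, 12], [1, 2, 7, 8, 9, 10, 11, 6, 5, 4, 3, 12, 13, 0]),
  ([13, 0, 1, 10, 11, 12, 3, 2, 7, 6, 5, 4, 9, 8], [1, 2, 7, 6, 11, 10, 9, 8, 13, 12, 3, 4, 5, 0]),
  ([13, 0, 5, 4, 3, 12, 11, 6, 7, 2, 1, 10, 9, 8], [1, 10, 9, 4, 3, 2, 7, 8, 13, 12, 11, 6, 5, 0]),
  ([13, 0, 5, 4, 9, 8, 7, 6, 11, 10, 1, 2, 3, 12], [1, 10, 11, 12, 3, 2, 7, 6, 5, 4, 9, 8, 13, 0]),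
  ([13, 0, 5, 6, 7, 8, 9, 4, 3, 2, 1, 10, 11, 12], [1, 10, 9, 8, 7, 2, 3, 4, 5, 6, 11, 12, 13, 0]),
  ([13, 0, 5, 6, 11, 12, 3, 4, 9, 10, 1, 2, 7, 8], [1, 10, 11, 6, 7, 2, 3, 12, 13, 8, 9, 4, 5, 0]),
  ([13, 8, 7, 2, 1, 0, 5, 6, 11, 10, 9, 4, 3, 12], [5, 4, 3, 12, 11, 6, 7, 2, 1, 10, 9, 8, 13, 0]),
  ([13, 8, 7, 2, 3, 12, 11, 6, 5, 4, 9, 10, 1, 0], [13, 12, 3, 4, 9, 8, 7, 2, 1, 10, 11, 6, 5, 0]),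
  ([13, 8, 7, 6, 5, 0, 1, 2, 3, 4, 9, 10, 11, 12], [5, 6, 7, 8, 9, 4, 3, 2, 1, 10, 11, 12, 13, 0]),
  ([13, 8, 7, 6, 11, 12, 3, 2, 1, 10, 9, 4, 5, 0], [13, 8, 7, 6, 11, 12, 3, 2, 1, 10, 9, 4, 5, 0]),
  ([13, 8, 9, 4, 3, 12, 11, 10, 1, 2, 7, 6, 5, 0], [13, 8, 9, 4, 3, 12, 11, 10, 1, 2, 7, 6, 5, 0]),
  ([13, 8, 9, 4, 5, 0, 1, 10, 11, 6, 7, 2, 3, 12], [5, 6, 11, 12, 3, 4, 9, 10, 1, 2, 7, 8, 13, 0]),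
  ([13, 8, 9, 10, 1, 0, 5, 4, 3, 2, 7, 6, 11, 12], [5, 4, 9, 8, 7, 6, 11, 10, 1, 2, 3, 12, 13, 0]),
  ([13, 8, 9, 10, 11, 12, 3, 4, 5, 6, 7, 2, 1, 0], [13, 12, 11, 6, 7, 8, 9, 10, 1, 2, 3, 4, 5, 0]),
  ([13, 12, 3, 2, 1, 0, 5, 4, 9, 10, 11, 6, 7, 8], [5, 4, 3, 2, 7, 6, 11, 12, 13, 8, 9, 10, 1, 0]),
  ([13, 12, 3, 2, 7, 8, 9, 4, 5, 6, 11, 10, 1, 0], [13, 12, 3, 2, 7, 8, 9, 4, 5, 6, 11, 10, 1, 0]),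
  ([13, 12, 3, 4, 5, 0, 1, 2, 7, 6, 11, 10, 9, 8], [5, 6, 7, 2, 3, 4, 9, 8, 13, 12, 11, 10, 1, 0]),
  ([13, 12, 3, 4, 9, 8, 7, 2, 1, 10, 11, 6, 5, 0], [13, 8, 7, 2, 3, 12, 11, 6, 5, 4, 9, 10, 1, 0]),
  ([13, 12, 11, 6, 5, 0, 1, 10, 9, 4, 3, 2, 7, 8], [5, 6, 11, 10, 9, 4, 3, 12, 13, 8, 7, 2, 1, 0]),
  ([13, 12, 11, 6, 7, 8, 9, 10, 1, 2, 3, 4, 5, 0], [13, 8, 9, 10, 11, 12, 3, 4, 5, 6, 7, 2, 1, 0]),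
  ([13, 12, 11, 10, 1, 0, 5, 6, 7, 2, 3, 4, 9, 8], [5, 4, 9, 10, 11, 6, 7, 8, 13, 12, 3, 2, 1, 0]),
  ([13, 12, 11, 10, 9, 8, 7, 6, 5, 4, 3, 2, 1, 0], [13, 12, 11, 10, 9, 8, 7, 6, 5, 4, 3, 2, 1, 0])]

def heawoodP : List (List (Fin 14) × List (Fin 14)) := heawoodP0 ++ heawoodP1 ++ heawoodP2 ++ heawoodP3 ++ heawoodP4 ++ heawoodP5 ++ heawoodP6 ++ heawoodP7 ++ heawoodP8 ++ heawoodP9 ++ heawoodP10 ++ heawoodP11 ++ heawoodP12 ++ heawoodP13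


set_option maxRecDepth 100000

/-! ### Basic computational infrastructure -/

def ap (l : List (Fin 14)) (x : Fin 14) : Fin 14 := l.getD x.val 0

def nbhdL : List (List (Fin 14)) := [[1, 5, 13], [0, 2, 10], [1, 3, 7], [2, 4, 12], [3, 5, 9], [0, 4, 6], [5, 7, 11], [2, 6, 8], [7, 9, 13], [4, 8, 10], [1, 9, 11], [6, 10, 12], [3, 11, 13], [0, 8, 12]]

def nbhd (x : Fin 14) : List (Fin 14) := nbhdL.getD x.val []

def adjB (x y : Fin 14) : Bool := decide (y ∈ nbhd x)

theorem hadjB : ∀ x y : ZMod 14, heawood.Adj x y ↔ adjB x y = true := by unfold adjB; decide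

theorem adjB_mem {x y : Fin 14} (h : adjB x y = true) : y ∈ nbhd x := of_decide_eq_true h

def okB (p : List (Fin 14) × List (Fin 14)) : Bool :=
  (List.finRange 14).all fun x =>
    ap p.2 (ap p.1 x) == x && ap p.1 (ap p.2 x) == x &&
    (nbhd x).all (fun y => adjB (ap p.1 x) (ap p.1 y)) &&
    (nbhd x).all (fun y => adjB (ap p.2 x) (ap p.2 y))

set_option maxRecDepth 100000 in
set_option maxHeartbeats 12000000 in
theorem hok : heawoodP.all okB = true := by rfl

theorem okB_spec {p : List (Fin 14) × List (Fin 14)} (h : okB p = true) :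
    (∀ x : Fin 14, ap p.2 (ap p.1 x) = x) ∧ (∀ x : Fin 14, ap p.1 (ap p.2 x) = x) ∧
    (∀ x y : Fin 14, adjB x y = true → adjB (ap p.1 x) (ap p.1 y) = true) ∧
    (∀ x y : Fin 14, adjB x y = true → adjB (ap p.2 x) (ap p.2 y) = true) := by
  rw [okB, List.all_eq_true] at h
  have h' := fun x : Fin 14 => h x (List.mem_finRange x)
  simp only [Bool.and_eq_true, beq_iff_eq, List.all_eq_true] at h'
  refine ⟨fun x => (h' x).1.1.1, fun x => (h' x).1.1.2, fun x y hxy => ?_, fun x y hxy => ?_⟩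
  · exact (h' x).1.2 y (of_decide_eq_true hxy)
  · exact (h' x).2 y (of_decide_eq_true hxy)

def mkAut (p : List (Fin 14) × List (Fin 14))
    (h1 : ∀ x : Fin 14, ap p.2 (ap p.1 x) = x)
    (h2 : ∀ x : Fin 14, ap p.1 (ap p.2 x) = x)
    (h3 : ∀ x y : Fin 14, adjB x y = true → adjB (ap p.1 x) (ap p.1 y) = true)
    (h4 : ∀ x y : Fin 14, adjB x y = true → adjB (ap p.2 x) (ap p.2 y) = true) :
    heawood ≃g heawood where
  toFun := fun x : ZMod 14 => ap p.1 x
  invFun := fun x : ZMod 14 => ap p.2 x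
  left_inv := h1
  right_inv := h2
  map_rel_iff' := by
    intro a b
    constructor
    · intro hadj
      have hadj' : heawood.Adj (ap p.1 a) (ap p.1 b) := hadj
      have h := h4 _ _ ((hadjB _ _).1 hadj')
      rw [h1 a, h1 b] at h
      exact (hadjB a b).2 h
    · intro hadj
      exact (hadjB _ _).2 (h3 _ _ ((hadjB a b).1 hadj))

/-! ### Keys and arcs -/

def encN (a b c d e : Nat) : Nat := (((a * 14 + b) * 14 + c) * 14 + d) * 14 + e

def keyN (p : List (Fin 14) × List (Fin 14)) : Nat :=
  encN (ap p.1 (0 : ZMod 14)).val (ap p.1 (1 : ZMod 14)).val (ap p.1 (2 : ZMod 14)).val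
    (ap p.1 (3 : ZMod 14)).val (ap p.1 (4 : ZMod 14)).val

def arcsList : List Nat :=
  (List.finRange 14).flatMap fun a =>
    (nbhd a).flatMap fun b =>
      ((nbhd b).filter (fun c => c != a)).flatMap fun c =>
        ((nbhd c).filter (fun d => d != a && d != b)).flatMap fun d =>
          ((nbhd d).filter (fun e => e != a && e != b && e != c)).map fun e =>
            encN a.val b.val c.val d.val e.val

set_option maxRecDepth 100000 in
set_option maxHeartbeats 4000000 in
theorem harcs : arcsList = heawoodP.map keyN := by rfl

def chainB : List Nat → Bool
  | a :: b :: t => decide (a < b) && chainB (b :: t)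
  | _ => true

theorem chainB_sound : ∀ l : List Nat, chainB l = true → l.Chain' (· < ·)
  | [], _ => List.isChain_nil
  | [a], _ => List.isChain_singleton a
  | a :: b :: t, h => by
    rw [chainB, Bool.and_eq_true] at h
    exact List.isChain_cons_cons.2 ⟨of_decide_eq_true h.1, chainB_sound (b :: t) h.2⟩

set_option maxRecDepth 100000 in
set_option maxHeartbeats 4000000 in
theorem hchain : List.Chain' (· < ·) arcsList := chainB_sound arcsList (by rfl)

theorem hne : ∀ x y : ZMod 14, x ≠ y → ((x : Fin 14) != (y : Fin 14)) = true := by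
  decide

theorem mem_arcs (a b c d e : ZMod 14) (hab : heawood.Adj a b) (hbc : heawood.Adj b c)
    (hcd : heawood.Adj c d) (hde : heawood.Adj d e) (hac : a ≠ c) (had : a ≠ d)
    (hae : a ≠ e) (hbd : b ≠ d) (hbe : b ≠ e) (hce : c ≠ e) :
    encN a.val b.val c.val d.val e.val ∈ arcsList := by
  refine List.mem_flatMap.2 ⟨a, List.mem_finRange a, ?_⟩
  refine List.mem_flatMap.2 ⟨b, adjB_mem ((hadjB a b).1 hab), ?_⟩
  refine List.mem_flatMap.2 ⟨c, List.mem_filter.2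
    ⟨adjB_mem ((hadjB b c).1 hbc), hne c a (Ne.symm hac)⟩, ?_⟩
  refine List.mem_flatMap.2 ⟨d, List.mem_filter.2
    ⟨adjB_mem ((hadjB c d).1 hcd),
      by rw [Bool.and_eq_true]; exact ⟨hne d a (Ne.symm had), hne d b (Ne.symm hbd)⟩⟩, ?_⟩
  refine List.mem_map.2 ⟨e, List.mem_filter.2
    ⟨adjB_mem ((hadjB d e).1 hde),
      by rw [Bool.and_eq_true, Bool.and_eq_true]
         exact ⟨⟨hne e a (Ne.symm hae), hne e b (Ne.symm hbe)⟩, hne e c (Ne.symm hce)⟩⟩, rfl⟩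

theorem encN_inj {a b c d e a' b' c' d' e' : Fin 14}
    (h : encN a.val b.val c.val d.val e.val = encN a'.val b'.val c'.val d'.val e'.val) :
    a = a' ∧ b = b' ∧ c = c' ∧ d = d' ∧ e = e' := by
  have ha := a.isLt; have hb := b.isLt; have hc := c.isLt; have hd := d.isLt
  have he := e.isLt; have ha' := a'.isLt; have hb' := b'.isLt; have hc' := c'.isLt
  have hd' := d'.isLt; have he' := e'.isLt
  simp only [encN] at h
  refine ⟨Fin.ext ?_, Fin.ext ?_, Fin.ext ?_, Fin.ext ?_, Fin.ext ?_⟩ <;> omega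

/-! ### Rigidity: an automorphism is determined by its values on 0, 1, 2, 3, 4 -/

theorem N3 (g : heawood ≃g heawood) (a b c d : ZMod 14)
    (hn : ∀ x, heawood.Adj a x ↔ (x = b ∨ x = c ∨ x = d))
    (ha : g a = a) (hb : g b = b) (hc : g c = c) : g d = d := by
  have had : heawood.Adj a d := (hn d).2 (Or.inr (Or.inr rfl))
  have h2 : heawood.Adj a (g d) := by
    have := g.map_rel_iff.2 had
    rwa [ha] at this
  rcases (hn (g d)).1 h2 with h | h | h
  · have : d = b := g.injective (by rw [h, hb])
    rw [this]; exact hb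
  · have : d = c := g.injective (by rw [h, hc])
    rw [this]; exact hc
  · exact h

theorem girth6 : ∀ u x : ZMod 14, heawood.Adj u x → ∀ v, heawood.Adj x v → u ≠ v →
    ∀ y, heawood.Adj u y → heawood.Adj y v → y = x := by decide

theorem CN (g : heawood ≃g heawood) (a b v : ZMod 14)
    (ha : g a = a) (hb : g b = b) (hab : a ≠ b)
    (h1 : heawood.Adj a v) (h2 : heawood.Adj v b) : g v = v := by
  have h1' : heawood.Adj a (g v) := by have := g.map_rel_iff.2 h1; rwa [ha] at this
  have h2' : heawood.Adj (g v) b := by have := g.map_rel_iff.2 h2; rwa [hb] at this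
  exact girth6 a v h1 b h2 hab (g v) h1' h2'

theorem fixed_all (g : heawood ≃g heawood) (h0 : g 0 = 0) (h1 : g 1 = 1) (h2 : g 2 = 2)
    (h3 : g 3 = 3) (h4 : g 4 = 4) : ∀ x, g x = x := by
  have hg10 : g 10 = 10 := N3 g 1 0 2 10 (by decide) h1 h0 h2
  have hg7 : g 7 = 7 := N3 g 2 1 3 7 (by decide) h2 h1 h3
  have hg12 : g 12 = 12 := N3 g 3 2 4 12 (by decide) h3 h2 h4
  have hg13 : g 13 = 13 := CN g 0 12 13 h0 hg12 (by decide) (by decide) (by decide)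
  have hg5 : g 5 = 5 := N3 g 0 1 13 5 (by decide) h0 h1 hg13
  have hg9 : g 9 = 9 := N3 g 4 3 5 9 (by decide) h4 h3 hg5
  have hg8 : g 8 = 8 := N3 g 13 12 0 8 (by decide) hg13 hg12 h0
  have hg6 : g 6 = 6 := N3 g 7 8 2 6 (by decide) hg7 hg8 h2
  have hg11 : g 11 = 11 := N3 g 10 9 1 11 (by decide) hg10 hg9 h1
  intro x
  have hx : x = 0 ∨ x = 1 ∨ x = 2 ∨ x = 3 ∨ x = 4 ∨ x = 5 ∨ x = 6 ∨ x = 7 ∨ x = 8 ∨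
      x = 9 ∨ x = 10 ∨ x = 11 ∨ x = 12 ∨ x = 13 := by revert x; decide
  rcases hx with h|h|h|h|h|h|h|h|h|h|h|h|h|h <;> rw [h] <;> assumption

theorem unique_aut (g e : heawood ≃g heawood) (h0 : g 0 = e 0) (h1 : g 1 = e 1)
    (h2 : g 2 = e 2) (h3 : g 3 = e 3) (h4 : g 4 = e 4) : g = e := by
  set k : heawood ≃g heawood := g.trans e.symm with hk
  have hfix : ∀ x, k x = x := by
    apply fixed_all <;>
      · show e.symm (g _) = _
        rw [show g _ = e _ from by assumption]
        exact e.symm_apply_apply _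
  have : ∀ x, g x = e x := by
    intro x
    have := hfix x
    have h' : e.symm (g x) = x := this
    calc g x = e (e.symm (g x)) := (e.apply_symm_apply _).symm
    _ = e x := by rw [h']
  exact RelIso.ext this

/-! ### The bijection -/

theorem hPlen : heawoodP.length = 336 := by rfl

def fIdx (i : Fin 336) : heawood ≃g heawood :=
  let p := heawoodP[i.val]'(by rw [hPlen]; exact i.isLt)
  have h := okB_spec (List.all_eq_true.mp hok p (List.getElem_mem _))
  mkAut p h.1 h.2.1 h.2.2.1 h.2.2.2

theorem fIdx_inj : Function.Injective fIdx := by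
  intro i j hij
  have hx : ∀ x : ZMod 14,
      ap (heawoodP[i.val]'(by rw [hPlen]; exact i.isLt)).1 x =
      ap (heawoodP[j.val]'(by rw [hPlen]; exact j.isLt)).1 x :=
    fun x => DFunLike.congr_fun hij x
  have hkey : keyN (heawoodP[i.val]'(by rw [hPlen]; exact i.isLt)) =
      keyN (heawoodP[j.val]'(by rw [hPlen]; exact j.isLt)) := by
    unfold keyN
    rw [hx 0, hx 1, hx 2, hx 3, hx 4]
  have hnd : (heawoodP.map keyN).Nodup := by
    have hp := List.isChain_iff_pairwise.mp (harcs ▸ hchain)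
    exact hp.imp (fun hlt => Nat.ne_of_lt hlt)
  have hmi : i.val < (heawoodP.map keyN).length := by simp [hPlen]
  have hmj : j.val < (heawoodP.map keyN).length := by simp [hPlen]
  have hKK : (heawoodP.map keyN)[i.val]'hmi = (heawoodP.map keyN)[j.val]'hmj := by
    rw [List.getElem_map, List.getElem_map]
    exact hkey
  exact Fin.ext ((List.Nodup.getElem_inj_iff hnd).1 hKK)

theorem fIdx_surj : Function.Surjective fIdx := by
  intro e
  have hadj01 : heawood.Adj (e 0) (e 1) := e.map_rel_iff.2 (by decide)
  have hadj12 : heawood.Adj (e 1) (e 2) := e.map_rel_iff.2 (by decide)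
  have hadj23 : heawood.Adj (e 2) (e 3) := e.map_rel_iff.2 (by decide)
  have hadj34 : heawood.Adj (e 3) (e 4) := e.map_rel_iff.2 (by decide)
  have hne' : ∀ u v : ZMod 14, u ≠ v → e u ≠ e v := fun u v h hc => h (e.injective hc)
  have hmem := mem_arcs (e 0) (e 1) (e 2) (e 3) (e 4) hadj01 hadj12 hadj23 hadj34
    (hne' 0 2 (by decide)) (hne' 0 3 (by decide)) (hne' 0 4 (by decide))
    (hne' 1 3 (by decide)) (hne' 1 4 (by decide)) (hne' 2 4 (by decide))
  have hmem2 : encN (e 0).val (e 1).val (e 2).val (e 3).val (e 4).val ∈ heawoodP.map keyN :=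
    harcs ▸ hmem
  obtain ⟨p, hpP, hpk⟩ := List.mem_map.1 hmem2
  obtain ⟨n, hget⟩ := List.mem_iff_get.1 hpP
  have hn336 : n.val < 336 := lt_of_lt_of_eq n.isLt hPlen
  refine ⟨⟨n.val, hn336⟩, ?_⟩
  have hgetElem : heawoodP[n.val]'n.isLt = p := hget
  have hkeq : keyN p = encN (e 0).val (e 1).val (e 2).val (e 3).val (e 4).val := hpk
  obtain ⟨k0, k1, k2, k3, k4⟩ := encN_inj hkeq
  apply unique_aut
  · show ap (heawoodP[n.val]'_).1 (0 : ZMod 14) = e 0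
    rw [hgetElem]; exact k0
  · show ap (heawoodP[n.val]'_).1 (1 : ZMod 14) = e 1
    rw [hgetElem]; exact k1
  · show ap (heawoodP[n.val]'_).1 (2 : ZMod 14) = e 2
    rw [hgetElem]; exact k2
  · show ap (heawoodP[n.val]'_).1 (3 : ZMod 14) = e 3
    rw [hgetElem]; exact k3
  · show ap (heawoodP[n.val]'_).1 (4 : ZMod 14) = e 4
    rw [hgetElem]; exact k4

/-- The automorphism group of the Heawood graph has order 336. -/
theorem heawood_aut_card : Nat.card (heawood ≃g heawood) = 336 := by
  exact Nat.card_eq_of_equiv_fin (Equiv.ofBijective fIdx ⟨fIdx_inj, fIdx_surj⟩).symm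
end

section
/- Every automorphism of order 3 of the Heawood graph fixes precisely two vertices. -/
instance inst_s12 : DecidableRel heawood.Adj := fun i j =>
  decidable_of_iff (i ≠ j ∧ (j = i + 1 ∨ j = i - 1 ∨
    (i.val % 2 = 0 ∧ j = i + 5) ∨ (i.val % 2 = 1 ∧ j = i - 5))) Iff.rfl

/-- one closure step: add every vertex adjacent to the endpoint of an edge inside `S`. -/
def heawoodStep (S : Finset (ZMod 14)) : Finset (ZMod 14) :=
  S ∪ Finset.univ.filter (fun w => ∃ x ∈ S, ∃ y ∈ S, heawood.Adj x y ∧ heawood.Adj y w)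

lemma heawood_degree : ∀ v : ZMod 14,
    (Finset.univ.filter (heawood.Adj v)).card = 3 := by decide

lemma heawood_step_two (u v : ZMod 14) (h : heawood.Adj u v) :
    heawoodStep (heawoodStep {u, v}) = Finset.univ := by revert h; revert u v; decide

lemma heawood_common_nbr (u v x y : ZMod 14) (huv : u ≠ v)
    (h1 : heawood.Adj u x) (h2 : heawood.Adj v x)
    (h3 : heawood.Adj u y) (h4 : heawood.Adj v y) : x = y := by
  revert huv h1 h2 h3 h4; revert u v x y; decide

lemma heawood_no_three_far (a b c : ZMod 14) (hab : a ≠ b) (hac : a ≠ c) (hbc : b ≠ c)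
    (h1 : ¬ heawood.Adj a b) (h2 : ¬ heawood.Adj a c) (h3 : ¬ heawood.Adj b c)
    (c1 : ∀ x, ¬(heawood.Adj a x ∧ heawood.Adj b x))
    (c2 : ∀ x, ¬(heawood.Adj a x ∧ heawood.Adj c x))
    (c3 : ∀ x, ¬(heawood.Adj b x ∧ heawood.Adj c x)) : False := by
  revert hab hac hbc h1 h2 h3 c1 c2 c3; revert a b c; decide

/-- Every automorphism of order 3 of the Heawood graph fixes precisely two vertices. -/
theorem heawood_order_three_fixes_two_vertices (α : heawood ≃g heawood)
    (hα : orderOf α = 3) :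
    {v : ZMod 14 | α v = v}.ncard = 2 := by
  have hinj : Function.Injective α := α.toEquiv.injective
  have hadj : ∀ x y, heawood.Adj x y → heawood.Adj (α x) (α y) := fun x y h =>
    α.map_rel_iff.mpr h
  have hcube : α ^ 3 = 1 := by rw [← hα]; exact pow_orderOf_eq_one α
  have hf3 : ∀ v, α (α (α v)) = v := by
    intro v
    have h1 : α ^ 3 = α * (α * α) := by
      rw [pow_succ, pow_succ, pow_one, mul_assoc]
    have := congrArg (fun (g : heawood ≃g heawood) => g v) (h1.symm.trans hcube)
    exact this
  -- the permutation underlying α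
  set σ : Equiv.Perm (ZMod 14) := α.toEquiv with hσ
  have hσv : ∀ v, σ v = α v := fun v => rfl
  have hσne : σ ≠ 1 := by
    intro h
    have h1 : α = 1 := by
      have : α.toEquiv = (1 : heawood ≃g heawood).toEquiv := h
      exact RelIso.toEquiv_injective this
    rw [h1, orderOf_one] at hα
    exact (by norm_num : (1 : ℕ) ≠ 3) hα
  -- key local lemma : if α fixes two adjacent vertices, it fixes all neighbours of the second
  have L : ∀ u v w, heawood.Adj u v → heawood.Adj v w → α u = u → α v = v → α w = w := by
    intro u v w huv hvw hu hv
    by_cases hwu : w = u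
    · rw [hwu]; exact hu
    by_cases hw : α w = w
    · exact hw
    exfalso
    have hsub : ({u, w, α w} : Finset (ZMod 14)) ⊆ Finset.univ.filter (heawood.Adj v) := by
      intro z hz
      simp only [Finset.mem_insert, Finset.mem_singleton] at hz
      rcases hz with rfl | rfl | rfl
      · exact Finset.mem_filter.mpr ⟨Finset.mem_univ _, heawood.adj_symm huv⟩
      · exact Finset.mem_filter.mpr ⟨Finset.mem_univ _, hvw⟩
      · refine Finset.mem_filter.mpr ⟨Finset.mem_univ _, ?_⟩
        have := hadj v w hvw
        rwa [hv] at this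
    have hαwu : α w ≠ u := by
      intro h
      exact hwu (hinj (by rw [h, hu]))
    have hαww : α w ≠ w := hw
    have hcard : ({u, w, α w} : Finset (ZMod 14)).card = 3 := by
      rw [Finset.card_insert_of_notMem, Finset.card_insert_of_notMem, Finset.card_singleton]
      · simp [Ne.symm hαww]
      · simp [Ne.symm hwu, Ne.symm hαwu]
    have heq : (Finset.univ.filter (heawood.Adj v)) = ({u, w, α w} : Finset (ZMod 14)) :=
      (Finset.eq_of_subset_of_card_le hsub (by rw [hcard, heawood_degree v])).symm
    -- α (α w) is also a neighbour of v
    have hmem : α (α w) ∈ (Finset.univ.filter (heawood.Adj v)) := by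
      refine Finset.mem_filter.mpr ⟨Finset.mem_univ _, ?_⟩
      have h1 := hadj v w hvw
      rw [hv] at h1
      have h2 := hadj v (α w) h1
      rwa [hv] at h2
    rw [heq] at hmem
    simp only [Finset.mem_insert, Finset.mem_singleton] at hmem
    rcases hmem with h | h | h
    · exact hαwu (hinj (by rw [h, hu]))
    · -- α (α w) = w, so α (α (α w)) = α w, but also = w
      have := hf3 w
      rw [h] at this
      exact hw this
    · exact hαww (hinj h)
  -- if α fixes two adjacent vertices then α fixes everything
  have hclosure : ∀ u v, heawood.Adj u v → α u = u → α v = v → False := by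
    intro u v huv hu hv
    set F : Finset (ZMod 14) := Finset.univ.filter (fun x => α x = x) with hF
    have hstep : ∀ S : Finset (ZMod 14), S ⊆ F → heawoodStep S ⊆ F := by
      intro S hS w hw
      rcases Finset.mem_union.mp hw with h | h
      · exact hS h
      · obtain ⟨_, x, hx, y, hy, hxy, hyw⟩ := Finset.mem_filter.mp h
        have hxF := (Finset.mem_filter.mp (hS hx)).2
        have hyF := (Finset.mem_filter.mp (hS hy)).2
        exact Finset.mem_filter.mpr ⟨Finset.mem_univ _, L x y w hxy hyw hxF hyF⟩
    have h0 : ({u, v} : Finset (ZMod 14)) ⊆ F := by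
      intro z hz
      simp only [Finset.mem_insert, Finset.mem_singleton] at hz
      rcases hz with rfl | rfl
      · exact Finset.mem_filter.mpr ⟨Finset.mem_univ _, hu⟩
      · exact Finset.mem_filter.mpr ⟨Finset.mem_univ _, hv⟩
    have hall : Finset.univ ⊆ F := by
      rw [← heawood_step_two u v huv]
      exact hstep _ (hstep _ h0)
    have : σ = 1 := by
      apply Equiv.ext
      intro x
      exact (Finset.mem_filter.mp (hall (Finset.mem_univ x))).2
    exact hσne this
  -- distinct fixed points are non-adjacent and share no common neighbour
  have hfar : ∀ u v, α u = u → α v = v → u ≠ v →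
      ¬ heawood.Adj u v ∧ ∀ x, ¬(heawood.Adj u x ∧ heawood.Adj v x) := by
    intro u v hu hv huv
    constructor
    · intro h; exact hclosure u v h hu hv
    · rintro x ⟨h1, h2⟩
      have hax1 : heawood.Adj u (α x) := by
        have := hadj u x h1; rwa [hu] at this
      have hax2 : heawood.Adj v (α x) := by
        have := hadj v x h2; rwa [hv] at this
      have hxfix : α x = x :=
        heawood_common_nbr u v (α x) x huv hax1 hax2 h1 h2
      exact hclosure u x h1 hu hxfix
  -- the fixed set as a finset
  have hsetF : {v : ZMod 14 | α v = v} = ↑(Finset.univ.filter (fun x : ZMod 14 => α x = x)) := by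
    ext x; simp
  rw [hsetF, Set.ncard_coe_finset]
  set F : Finset (ZMod 14) := Finset.univ.filter (fun x : ZMod 14 => α x = x) with hFdef
  -- upper bound: at most two fixed points
  have hle : F.card ≤ 2 := by
    by_contra h
    push_neg at h
    obtain ⟨a, b, c, ha, hb, hc, hab, hac, hbc⟩ := Finset.two_lt_card_iff.mp h
    have hfa := (Finset.mem_filter.mp ha).2
    have hfb := (Finset.mem_filter.mp hb).2
    have hfc := (Finset.mem_filter.mp hc).2
    obtain ⟨nab, cab⟩ := hfar a b hfa hfb hab
    obtain ⟨nac, cac⟩ := hfar a c hfa hfc hac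
    obtain ⟨nbc, cbc⟩ := hfar b c hfb hfc hbc
    exact heawood_no_three_far a b c hab hac hbc nab nac nbc cab cac cbc
  -- congruence: #fixed ≡ 14 [MOD 3]
  have hσord : orderOf σ = 3 := by
    have h := orderOf_injective (G := heawood ≃g heawood)
      { toFun := fun a : heawood ≃g heawood => a.toEquiv,
        map_one' := rfl, map_mul' := fun _ _ => rfl }
      RelIso.toEquiv_injective α
    exact h.trans hα
  haveI : Fact (Nat.Prime 3) := ⟨by norm_num⟩
  have hP : IsPGroup 3 (Subgroup.zpowers σ) := by
    exact IsPGroup.of_card (n := 1) (by rw [Nat.card_zpowers, hσord]; norm_num)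
  have hcong := hP.card_modEq_card_fixedPoints (ZMod 14)
  have hfix : MulAction.fixedPoints (Subgroup.zpowers σ) (ZMod 14) = {v : ZMod 14 | σ v = v} := by
    ext v
    simp only [MulAction.mem_fixedPoints, Set.mem_setOf_eq]
    constructor
    · intro h
      exact h ⟨σ, Subgroup.mem_zpowers σ⟩
    · intro h g
      obtain ⟨k, hk⟩ := Subgroup.mem_zpowers_iff.mp g.2
      show ((g : Equiv.Perm (ZMod 14))) v = v
      rw [← hk]
      exact Function.IsFixedPt.perm_zpow h k
  rw [hfix] at hcong
  have hσα : {v : ZMod 14 | σ v = v} = (↑F : Set (ZMod 14)) := by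
    rw [← hsetF]; rfl
  rw [hσα] at hcong
  have h1 : Nat.card (↑(↑F : Set (ZMod 14)) : Type) = F.card := by
    rw [Nat.card_coe_set_eq, Set.ncard_coe_finset]
  have h2 : Nat.card (ZMod 14) = 14 := by
    rw [Nat.card_eq_fintype_card, ZMod.card]
  rw [h1, h2] at hcong
  have := hcong
  unfold Nat.ModEq at this
  omega
end

section
/- The permutation of the vertices of the Heawood graph has no element of order 14 and no element of order 21; equivalently, in the automorphism group of the Heawood graph, no element of order 2 commutes with an element of order 7, and no element of order 3 commutes with an element of order 7. -/
namespace HeawoodAux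

instance : DecidableRel heawood.Adj := fun i j =>
  inferInstanceAs (Decidable (i ≠ j ∧ _))

abbrev Aut := heawood ≃g heawood

/-- Parity of a vertex. -/
def par (v : ZMod 14) : ZMod 2 := (v.val : ZMod 2)

lemma adj_par : ∀ i j, heawood.Adj i j → par j = par i + 1 := by decide

lemma adj_succ : ∀ i : ZMod 14, heawood.Adj i (i+1) := by decide

set_option maxHeartbeats 2000000 in
/-- The Heawood graph has no 4-cycles: two distinct vertices have at most one common
neighbour. -/
lemma no_c4 : ∀ x y u w : ZMod 14, x ≠ y → u ≠ w → heawood.Adj u x → heawood.Adj u y →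
    heawood.Adj w x → heawood.Adj w y → False := by decide

lemma nbr1 : ∀ x, heawood.Adj 1 x → x ∈ ({0,2,10} : Finset (ZMod 14)) := by decide

lemma nbr0 : ∀ x, heawood.Adj 0 x → x ∈ ({1,13,5} : Finset (ZMod 14)) := by decide

lemma nbr0' : ∀ x, heawood.Adj 0 x → x = 1 ∨ x = 13 ∨ x = 5 := by decide

lemma mul_apply (σ τ : Aut) (v : ZMod 14) : (σ * τ) v = σ (τ v) := rfl

lemma one_apply (v : ZMod 14) : (1 : Aut) v = v := rfl

lemma pow_succ_apply (σ : Aut) (n : ℕ) (v : ZMod 14) :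
    (σ^(n+1)) v = σ ((σ^n) v) := by rw [pow_succ']; rfl

lemma map_adj (σ : Aut) {a b : ZMod 14} (h : heawood.Adj a b) :
    heawood.Adj (σ a) (σ b) := σ.map_adj_iff.mpr h

lemma comm_apply {α β : Aut} (h : Commute α β) (v : ZMod 14) : α (β v) = β (α v) :=
  congrArg (fun σ : Aut => σ v) h.eq

lemma par_hom (σ : Aut) : ∀ v, par (σ v) = par v + par (σ 0) := by
  have step : ∀ v : ZMod 14, par (σ (v+1)) = par (σ v) + 1 := fun v =>
    adj_par _ _ (map_adj σ (adj_succ v))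
  have key : ∀ n : ℕ, par (σ (n : ZMod 14)) = par ((n : ZMod 14)) + par (σ 0) := by
    intro n
    induction n with
    | zero =>
        simp only [Nat.cast_zero]
        rw [show par (0:ZMod 14) = 0 from rfl, zero_add]
    | succ n ih =>
        push_cast
        rw [step, ih, show par ((n : ZMod 14) + 1) = par ((n : ZMod 14)) + 1 from
          adj_par _ _ (adj_succ _)]
        ring
  intro v
  have h := key v.val
  simpa using h

lemma par_pow (σ : Aut) : ∀ (n : ℕ) (v), par ((σ^n) v) = par v + (n : ZMod 2) * par (σ 0) := by
  intro n
  induction n with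
  | zero => intro v; rw [pow_zero, one_apply]; simp
  | succ n ih =>
      intro v
      rw [pow_succ_apply, par_hom σ, ih]
      push_cast
      ring

lemma pow_mod {σ : Aut} {m : ℕ} (h : σ^m = 1) (n : ℕ) : σ^n = σ^(n % m) := by
  conv_lhs => rw [← Nat.div_add_mod n m]
  rw [pow_add, pow_mul, h, one_pow, one_mul]

lemma fix_of_pow_fix {β : Aut} (h7 : β^7 = 1) {d : ℕ} (hd1 : 1 ≤ d) (hd : d < 7)
    {v : ZMod 14} (hv : (β^d) v = v) : β v = v := by
  have key : ∀ m : ℕ, (β^(d*m)) v = v := by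
    intro m
    induction m with
    | zero => rw [Nat.mul_zero, pow_zero, one_apply]
    | succ m ih => rw [Nat.mul_succ, pow_add, mul_apply, hv, ih]
  interval_cases d
  · simpa using key 1
  · have h := key 4; rw [pow_mod h7] at h; norm_num at h; exact h
  · have h := key 5; rw [pow_mod h7] at h; norm_num at h; exact h
  · have h := key 2; rw [pow_mod h7] at h; norm_num at h; exact h
  · have h := key 3; rw [pow_mod h7] at h; norm_num at h; exact h
  · have h := key 6; rw [pow_mod h7] at h; norm_num at h; exact h

lemma pow_inj {β : Aut} (h7 : β^7 = 1) {v : ZMod 14} (hv : β v ≠ v) :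
    ∀ i j, i < 7 → j < 7 → (β^i) v = (β^j) v → i = j := by
  have key : ∀ i j, i < j → j < 7 → (β^i) v = (β^j) v → False := by
    intro i j hij hj7 heq
    have h1 : (β^(j-i)) ((β^i) v) = (β^i) v := by
      rw [← mul_apply, ← pow_add, show j - i + i = j by omega]
      exact heq.symm
    have h2 : β ((β^i) v) = (β^i) v :=
      fix_of_pow_fix h7 (by omega) (by omega) h1
    have h3 : (β^i) (β v) = (β^i) v := by
      have h4 : (β^(i+1)) v = (β^i) v := by rw [pow_succ_apply, h2]
      rw [pow_succ, mul_apply] at h4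
      exact h4
    exact hv ((β^i).injective h3)
  intro i j hi hj heq
  rcases lt_trichotomy i j with h | h | h
  · exact (key i j h hj heq).elim
  · exact h
  · exact (key j i h hi heq.symm).elim

lemma no_fix {β : Aut} {v u : ZMod 14} (hv : β v ≠ v) (h : ∃ k, (β^k) v = u) : β u ≠ u := by
  obtain ⟨k, rfl⟩ := h
  intro h
  have h3 : (β^k) (β v) = (β^k) v := by
    have h4 : (β^(k+1)) v = (β^k) v := by rw [pow_succ_apply, h]
    rw [pow_succ, mul_apply] at h4
    exact h4
  exact hv ((β^k).injective h3)

lemma trans_part {β : Aut} (h7 : β^7 = 1) (hpar : ∀ u, par (β u) = par u)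
    {v : ZMod 14} (hv : β v ≠ v) : ∀ u, par u = par v → ∃ k, k < 7 ∧ (β^k) v = u := by
  have hparpow : ∀ (k : ℕ) (u), par ((β^k) u) = par u := by
    intro k
    induction k with
    | zero => intro u; rw [pow_zero, one_apply]
    | succ k ih => intro u; rw [pow_succ_apply, hpar, ih]
  classical
  have hinj' : Set.InjOn (fun k => (β^k) v) (Finset.range 7) := by
    intro i hi j hj hij
    simp only [Finset.coe_range, Set.mem_Iio] at hi hj
    exact pow_inj h7 hv i j hi hj hij
  have hcard : ((Finset.range 7).image (fun k => (β^k) v)).card = 7 := by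
    rw [Finset.card_image_of_injOn hinj', Finset.card_range]
  have hsub : (Finset.range 7).image (fun k => (β^k) v) ⊆
      Finset.univ.filter (fun u => par u = par v) := by
    intro u hu
    obtain ⟨k, _, rfl⟩ := Finset.mem_image.mp hu
    simp [hparpow]
  have h01 : ∀ x : ZMod 2, x = 0 ∨ x = 1 := by decide
  have hFcard : (Finset.univ.filter (fun u => par u = par v)).card = 7 := by
    rcases h01 (par v) with h | h <;> rw [h] <;> decide
  have hSF : (Finset.range 7).image (fun k => (β^k) v) =
      Finset.univ.filter (fun u => par u = par v) :=
    Finset.eq_of_subset_of_card_le hsub (by rw [hFcard, hcard])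
  intro u hu
  have hmem : u ∈ (Finset.range 7).image (fun k => (β^k) v) := by
    rw [hSF]; simp [hu]
  obtain ⟨k, hk, hk2⟩ := Finset.mem_image.mp hmem
  exact ⟨k, Finset.mem_range.mp hk, hk2⟩

lemma moved {β : Aut} (h7 : β^7 = 1) (hpar : ∀ u, par (β u) = par u) (hne : β ≠ 1) :
    (∃ v, par v = 0 ∧ β v ≠ v) ∧ (∃ v, par v = 1 ∧ β v ≠ v) := by
  have hex : ∃ v, β v ≠ v := by
    by_contra h
    push_neg at h
    exact hne (by ext v; exact h v)
  obtain ⟨v, hv⟩ := hex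
  have h01 : ∀ x : ZMod 2, x = 0 ∨ x = 1 := by decide
  have evenToOdd : ∀ v, par v = 0 → β v ≠ v → ∃ w, par w = 1 ∧ β w ≠ w := by
    intro v hv0 hv
    by_contra hno
    push_neg at hno
    have hfix1 : β 1 = 1 := hno 1 (by decide)
    have hb0 : β 0 ≠ 0 := by
      obtain ⟨k, _, hk⟩ := trans_part h7 hpar hv 0 (by rw [hv0]; decide)
      exact no_fix hv ⟨k, hk⟩
    have step : ∀ x ∈ ({0,2,10} : Finset (ZMod 14)), β x ∈ ({0,2,10} : Finset (ZMod 14)) := by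
      intro x hx
      have hadj : heawood.Adj 1 x := by fin_cases hx <;> decide
      have h2 := map_adj β hadj
      rw [hfix1] at h2
      exact nbr1 _ h2
    have hmem : ∀ k : ℕ, (β^k) 0 ∈ ({0,2,10} : Finset (ZMod 14)) := by
      intro k
      induction k with
      | zero => rw [pow_zero, one_apply]; decide
      | succ k ih => rw [pow_succ_apply]; exact step _ ih
    have hinj' : Set.InjOn (fun k => (β^k) (0:ZMod 14)) (Finset.range 4) := by
      intro i hi j hj hij
      simp only [Finset.coe_range, Set.mem_Iio] at hi hj
      exact pow_inj h7 hb0 i j (by omega) (by omega) hij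
    have hc4 : ((Finset.range 4).image (fun k => (β^k) (0:ZMod 14))).card = 4 := by
      rw [Finset.card_image_of_injOn hinj', Finset.card_range]
    have hsub : (Finset.range 4).image (fun k => (β^k) (0:ZMod 14)) ⊆
        ({0,2,10} : Finset (ZMod 14)) := by
      intro u hu
      obtain ⟨k, _, rfl⟩ := Finset.mem_image.mp hu
      exact hmem k
    have hle := Finset.card_le_card hsub
    rw [hc4] at hle
    have h3 : ({0,2,10} : Finset (ZMod 14)).card = 3 := by decide
    omega
  have oddToEven : ∀ v, par v = 1 → β v ≠ v → ∃ w, par w = 0 ∧ β w ≠ w := by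
    intro v hv1 hv
    by_contra hno
    push_neg at hno
    have hfix0 : β 0 = 0 := hno 0 (by decide)
    have hb1 : β 1 ≠ 1 := by
      obtain ⟨k, _, hk⟩ := trans_part h7 hpar hv 1 (by rw [hv1]; decide)
      exact no_fix hv ⟨k, hk⟩
    have step : ∀ x ∈ ({1,13,5} : Finset (ZMod 14)), β x ∈ ({1,13,5} : Finset (ZMod 14)) := by
      intro x hx
      have hadj : heawood.Adj 0 x := by fin_cases hx <;> decide
      have h2 := map_adj β hadj
      rw [hfix0] at h2
      exact nbr0 _ h2
    have hmem : ∀ k : ℕ, (β^k) 1 ∈ ({1,13,5} : Finset (ZMod 14)) := by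
      intro k
      induction k with
      | zero => rw [pow_zero, one_apply]; decide
      | succ k ih => rw [pow_succ_apply]; exact step _ ih
    have hinj' : Set.InjOn (fun k => (β^k) (1:ZMod 14)) (Finset.range 4) := by
      intro i hi j hj hij
      simp only [Finset.coe_range, Set.mem_Iio] at hi hj
      exact pow_inj h7 hb1 i j (by omega) (by omega) hij
    have hc4 : ((Finset.range 4).image (fun k => (β^k) (1:ZMod 14))).card = 4 := by
      rw [Finset.card_image_of_injOn hinj', Finset.card_range]
    have hsub : (Finset.range 4).image (fun k => (β^k) (1:ZMod 14)) ⊆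
        ({1,13,5} : Finset (ZMod 14)) := by
      intro u hu
      obtain ⟨k, _, rfl⟩ := Finset.mem_image.mp hu
      exact hmem k
    have hle := Finset.card_le_card hsub
    rw [hc4] at hle
    have h3 : ({1,13,5} : Finset (ZMod 14)).card = 3 := by decide
    omega
  rcases h01 (par v) with h | h
  · exact ⟨⟨v, h, hv⟩, evenToOdd v h hv⟩
  · exact ⟨oddToEven v h hv, ⟨v, h, hv⟩⟩

/-- Key lemma: no nontrivial element with `α² = 1` or `α³ = 1` commutes with a nontrivial
element with `β⁷ = 1`. -/
lemma cent {α β : Aut} (hcom : Commute α β) (h7 : β^7 = 1) (hbne : β ≠ 1)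
    (ha : α^2 = 1 ∨ α^3 = 1) (hane : α ≠ 1) : False := by
  have h01 : ∀ x : ZMod 2, x = 0 ∨ x = 1 := by decide
  have hcb : par (β 0) = 0 := by
    have h := par_pow β 7 0
    rw [h7, one_apply] at h
    revert h
    generalize par (β 0) = x
    revert x
    decide
  have hparβ : ∀ u, par (β u) = par u := fun u => by rw [par_hom β u, hcb, add_zero]
  obtain ⟨⟨ve, hve0, hve⟩, ⟨vo, hvo1, hvo⟩⟩ := moved h7 hparβ hbne
  have tE := trans_part h7 hparβ hve
  have tO := trans_part h7 hparβ hvo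
  have hparβpow : ∀ (k : ℕ) (u), par ((β^k) u) = par u := by
    intro k
    induction k with
    | zero => intro u; rw [pow_zero, one_apply]
    | succ k ih => intro u; rw [pow_succ_apply, hparβ, ih]
  rcases h01 (par (α 0)) with hca | hca
  · -- α preserves parity: α is a power of β on each part, so α^7 = 1
    have hparα : ∀ u, par (α u) = par u := fun u => by rw [par_hom α u, hca, add_zero]
    obtain ⟨k, hk7, hk⟩ := tE (α ve) (by rw [hparα])
    obtain ⟨m, hm7, hm⟩ := tO (α vo) (by rw [hparα])
    have hE : ∀ u, par u = par ve → α u = (β^k) u := by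
      intro u hu
      obtain ⟨j, _, rfl⟩ := tE u hu
      calc α ((β^j) ve) = (β^j) (α ve) := comm_apply (hcom.pow_right j) ve
        _ = (β^j) ((β^k) ve) := by rw [hk]
        _ = (β^(j+k)) ve := by rw [pow_add, mul_apply]
        _ = (β^k) ((β^j) ve) := by rw [Nat.add_comm, pow_add, mul_apply]
    have hO : ∀ u, par u = par vo → α u = (β^m) u := by
      intro u hu
      obtain ⟨j, _, rfl⟩ := tO u hu
      calc α ((β^j) vo) = (β^j) (α vo) := comm_apply (hcom.pow_right j) vo
        _ = (β^j) ((β^m) vo) := by rw [hm]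
        _ = (β^(j+m)) vo := by rw [pow_add, mul_apply]
        _ = (β^m) ((β^j) vo) := by rw [Nat.add_comm, pow_add, mul_apply]
    have hα7 : ∀ u, (α^7) u = u := by
      intro u
      rcases h01 (par u) with hu | hu
      · have key : ∀ n : ℕ, (α^n) u = (β^(n*k)) u := by
          intro n
          induction n with
          | zero => rw [Nat.zero_mul, pow_zero, pow_zero]
          | succ n ih =>
              rw [pow_succ_apply, ih, hE ((β^(n*k)) u) (by rw [hparβpow, hu, hve0]),
                ← mul_apply, ← pow_add]
              have he : k + n*k = (n+1)*k := by ring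
              rw [he]
        have h7k := key 7
        rw [pow_mul, h7, one_pow, one_apply] at h7k
        exact h7k
      · have key : ∀ n : ℕ, (α^n) u = (β^(n*m)) u := by
          intro n
          induction n with
          | zero => rw [Nat.zero_mul, pow_zero, pow_zero]
          | succ n ih =>
              rw [pow_succ_apply, ih, hO ((β^(n*m)) u) (by rw [hparβpow, hu, hvo1]),
                ← mul_apply, ← pow_add]
              have he : m + n*m = (n+1)*m := by ring
              rw [he]
        have h7k := key 7
        rw [pow_mul, h7, one_pow, one_apply] at h7k
        exact h7k
    have hα7' : α^7 = 1 := by ext u; exact hα7 u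
    rcases ha with h2 | h3
    · have hh : α^7 = (α^2)^3 * α := by rw [← pow_mul, ← pow_succ]
      rw [hα7', h2, one_pow, one_mul] at hh
      exact hane hh.symm
    · have hh : α^7 = (α^3)^2 * α := by rw [← pow_mul, ← pow_succ]
      rw [hα7', h3, one_pow, one_mul] at hh
      exact hane hh.symm
  · -- α flips parity
    have hparα : ∀ u, par (α u) = par u + 1 := fun u => by rw [par_hom α u, hca]
    rcases ha with h2 | h3
    · -- α² = 1 : then α·β is a 14-cycle, making Heawood a circulant graph: contradiction
      set γ := α * β with hγdef
      have hγ14 : γ^14 = 1 := by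
        rw [hγdef, hcom.mul_pow]
        rw [show (α:Aut)^14 = (α^2)^7 by rw [← pow_mul],
          show (β:Aut)^14 = (β^7)^2 by rw [← pow_mul]]
        rw [h2, h7, one_pow, one_pow, one_mul]
      have hparγ : ∀ v, par (γ v) = par v + 1 := by
        intro v
        rw [hγdef, mul_apply, hparα, hparβ]
      have hparγpow : ∀ (n : ℕ) (v), par ((γ^n) v) = par v + (n : ZMod 2) := by
        intro n
        induction n with
        | zero => intro v; rw [pow_zero, one_apply]; simp
        | succ n ih =>
            intro v
            rw [pow_succ_apply, hparγ, ih]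
            push_cast
            ring
      have hb0 : β 0 ≠ 0 := by
        obtain ⟨k, _, hk⟩ := tE 0 (by rw [hve0]; decide)
        exact no_fix hve ⟨k, hk⟩
      have hγeven : ∀ d : ℕ, d % 2 = 0 → γ^d = β^d := by
        intro d hd
        rw [hγdef, hcom.mul_pow]
        rw [show α^d = (α^2)^(d/2) by rw [← pow_mul]; congr 1; omega]
        rw [h2, one_pow, one_mul]
      have hfix_imp : ∀ d : ℕ, 0 < d → d < 14 → (γ^d) 0 = 0 → False := by
        intro d hd0 hd14 hfix
        rcases Nat.even_or_odd d with hpar | hpar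
        · have hd2 : d % 2 = 0 := Nat.even_iff.mp hpar
          rw [hγeven d hd2] at hfix
          rw [pow_mod h7] at hfix
          have hb00 : β (0:ZMod 14) = 0 :=
            fix_of_pow_fix h7 (by omega) (by omega) hfix
          exact hb0 hb00
        · have hd2 : d % 2 = 1 := Nat.odd_iff.mp hpar
          have h := hparγpow d 0
          rw [hfix] at h
          rw [show ((d:ℕ) : ZMod 2) = 1 by rw [← ZMod.natCast_mod d 2, hd2]; rfl] at h
          revert h
          decide
      have hinj : ∀ i j, i < 14 → j < 14 → (γ^i) 0 = (γ^j) 0 → i = j := by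
        have key : ∀ i j, i < j → j < 14 → (γ^i) 0 = (γ^j) 0 → False := by
          intro i j hij hj14 heq
          have h1 : (γ^i) ((γ^(j-i)) 0) = (γ^i) 0 := by
            rw [← mul_apply, ← pow_add, show i + (j-i) = j by omega]
            exact heq.symm
          exact hfix_imp (j-i) (by omega) (by omega) ((γ^i).injective h1)
        intro i j hi hj heq
        rcases lt_trichotomy i j with h | h | h
        · exact (key i j h hj heq).elim
        · exact h
        · exact (key j i h hi heq.symm).elim
      have hsurj : ∀ u : ZMod 14, ∃ a, a < 14 ∧ (γ^a) 0 = u := by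
        have hinj' : Set.InjOn (fun k => (γ^k) (0:ZMod 14)) (Finset.range 14) := by
          intro i hi j hj hij
          simp only [Finset.coe_range, Set.mem_Iio] at hi hj
          exact hinj i j hi hj hij
        have hcard : ((Finset.range 14).image (fun k => (γ^k) (0:ZMod 14))).card = 14 := by
          rw [Finset.card_image_of_injOn hinj', Finset.card_range]
        have huniv : (Finset.range 14).image (fun k => (γ^k) (0:ZMod 14)) = Finset.univ := by
          apply Finset.eq_univ_of_card
          rw [hcard]
          rfl
        intro u
        have hm : u ∈ (Finset.range 14).image (fun k => (γ^k) (0:ZMod 14)) := by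
          rw [huniv]; exact Finset.mem_univ u
        obtain ⟨a, ha, ha2⟩ := Finset.mem_image.mp hm
        exact ⟨a, Finset.mem_range.mp ha, ha2⟩
      obtain ⟨a1, ha1_14, ha1⟩ := hsurj 1
      obtain ⟨a2, ha2_14, ha2⟩ := hsurj 13
      obtain ⟨a3, ha3_14, ha3⟩ := hsurj 5
      have hγ0 : (γ^0) (0:ZMod 14) = 0 := by rw [pow_zero, one_apply]
      have ha1_0 : a1 ≠ 0 := fun h =>
        absurd (by rw [← hγ0, ← h, ha1] : (0:ZMod 14) = 1) (by decide)
      have ha2_0 : a2 ≠ 0 := fun h =>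
        absurd (by rw [← hγ0, ← h, ha2] : (0:ZMod 14) = 13) (by decide)
      have ha3_0 : a3 ≠ 0 := fun h =>
        absurd (by rw [← hγ0, ← h, ha3] : (0:ZMod 14) = 5) (by decide)
      have hne12 : a1 ≠ a2 := fun h =>
        absurd (by rw [← ha1, h, ha2] : (1:ZMod 14) = 13) (by decide)
      have hne13 : a1 ≠ a3 := fun h =>
        absurd (by rw [← ha1, h, ha3] : (1:ZMod 14) = 5) (by decide)
      have hne23 : a2 ≠ a3 := fun h =>
        absurd (by rw [← ha2, h, ha3] : (13:ZMod 14) = 5) (by decide)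
      have hclo : ∀ a : ℕ, 0 < a → a < 14 → heawood.Adj 0 ((γ^a) 0) →
          heawood.Adj 0 ((γ^(14-a)) 0) := by
        intro a ha0 ha14 hadj
        have h2' := map_adj (γ^(14-a)) hadj
        have he : (γ^(14-a)) ((γ^a) 0) = 0 := by
          rw [← mul_apply, ← pow_add, show 14 - a + a = 14 by omega, hγ14, one_apply]
        rw [he] at h2'
        exact h2'.symm
      have hmem : ∀ a : ℕ, 0 < a → a < 14 → heawood.Adj 0 ((γ^a) 0) →
          14 - a = a1 ∨ 14 - a = a2 ∨ 14 - a = a3 := by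
        intro a ha0 ha14 hadj
        have h2' := hclo a ha0 ha14 hadj
        rcases nbr0' _ h2' with h | h | h
        · exact Or.inl (hinj _ _ (by omega) ha1_14 (by rw [h, ha1]))
        · exact Or.inr (Or.inl (hinj _ _ (by omega) ha2_14 (by rw [h, ha2])))
        · exact Or.inr (Or.inr (hinj _ _ (by omega) ha3_14 (by rw [h, ha3])))
      have hadj1 : heawood.Adj 0 ((γ^a1) 0) := by rw [ha1]; decide
      have hadj2 : heawood.Adj 0 ((γ^a2) 0) := by rw [ha2]; decide
      have hadj3 : heawood.Adj 0 ((γ^a3) 0) := by rw [ha3]; decide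
      have hi1 := hmem a1 (by omega) ha1_14 hadj1
      have hi2 := hmem a2 (by omega) ha2_14 hadj2
      have hi3 := hmem a3 (by omega) ha3_14 hadj3
      have h7mem : a1 = 7 ∨ a2 = 7 ∨ a3 = 7 := by omega
      have hadj7 : heawood.Adj 0 ((γ^7) 0) := by
        rcases h7mem with h | h | h
        · rw [← h]; exact hadj1
        · rw [← h]; exact hadj2
        · rw [← h]; exact hadj3
      obtain ⟨s, hs0, hs14, hs7, hsadj⟩ :
          ∃ s : ℕ, 0 < s ∧ s < 14 ∧ s ≠ 7 ∧ heawood.Adj 0 ((γ^s) 0) := by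
        by_cases h : a1 = 7
        · exact ⟨a2, by omega, ha2_14, by omega, hadj2⟩
        · exact ⟨a1, by omega, ha1_14, h, hadj1⟩
      have hA3 : heawood.Adj ((γ^(s+7)) 0) ((γ^s) 0) := by
        have h2' := map_adj (γ^s) hadj7
        have he : (γ^s) ((γ^7) 0) = (γ^(s+7)) 0 := by rw [← mul_apply, ← pow_add]
        rw [he] at h2'
        exact h2'.symm
      have hA4 : heawood.Adj ((γ^(s+7)) 0) ((γ^7) 0) := by
        have h2' := map_adj (γ^7) hsadj
        have he : (γ^7) ((γ^s) 0) = (γ^(s+7)) 0 := by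
          rw [← mul_apply, ← pow_add, Nat.add_comm 7 s]
        rw [he] at h2'
        exact h2'.symm
      have hxy : (γ^s) (0:ZMod 14) ≠ (γ^7) 0 := fun h =>
        hs7 (hinj s 7 hs14 (by omega) h)
      have h0m : (0 : ZMod 14) ≠ (γ^(s+7)) 0 := by
        rw [show (γ:Aut)^(s+7) = γ^((s+7) % 14) from pow_mod hγ14 _]
        intro h
        have h' : (γ^0) (0:ZMod 14) = (γ^((s+7)%14)) 0 := by rw [hγ0]; exact h
        have := hinj 0 ((s+7)%14) (by omega) (by omega) h'
        omega
      exact no_c4 ((γ^s) 0) ((γ^7) 0) 0 ((γ^(s+7)) 0) hxy h0m hsadj hadj7 hA3 hA4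
    · -- α³ = 1 cannot flip parity
      have h30 : (α^3) (0:ZMod 14) = 0 := by rw [h3, one_apply]
      have h := par_pow α 3 0
      rw [h30, hca] at h
      revert h
      decide

end HeawoodAux

/-- The automorphism group of the Heawood graph has no element of order 14 and no element
of order 21; equivalently, no element of order 2 commutes with an element of order 7,
and no element of order 3 commutes with an element of order 7. -/
theorem heawood_no_order_fourteen_or_twentyone :
    (∀ α : heawood ≃g heawood, orderOf α ≠ 14 ∧ orderOf α ≠ 21) ∧
      (∀ α β : heawood ≃g heawood, orderOf α = 2 → orderOf β = 7 → ¬ Commute α β) ∧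
      (∀ α β : heawood ≃g heawood, orderOf α = 3 → orderOf β = 7 → ¬ Commute α β) := by
  have cent2 : ∀ α β : heawood ≃g heawood, orderOf α = 2 → orderOf β = 7 → ¬ Commute α β := by
    intro α β h2 h7 hcom
    refine HeawoodAux.cent hcom (by rw [← h7]; exact pow_orderOf_eq_one β) ?_
      (Or.inl (by rw [← h2]; exact pow_orderOf_eq_one α)) ?_
    · intro h; rw [h, orderOf_one] at h7; omega
    · intro h; rw [h, orderOf_one] at h2; omega
  have cent3 : ∀ α β : heawood ≃g heawood, orderOf α = 3 → orderOf β = 7 → ¬ Commute α β := by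
    intro α β h3 h7 hcom
    refine HeawoodAux.cent hcom (by rw [← h7]; exact pow_orderOf_eq_one β) ?_
      (Or.inr (by rw [← h3]; exact pow_orderOf_eq_one α)) ?_
    · intro h; rw [h, orderOf_one] at h7; omega
    · intro h; rw [h, orderOf_one] at h3; omega
  refine ⟨fun α => ⟨?_, ?_⟩, cent2, cent3⟩
  · intro h14
    have h1 : (α^7)^2 = 1 := by
      have he : (α^7)^2 = α^(orderOf α) := by
        rw [← pow_mul]; congr 1; omega
      rw [he]; exact pow_orderOf_eq_one α
    have h2 : (α^2)^7 = 1 := by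
      have he : (α^2)^7 = α^(orderOf α) := by
        rw [← pow_mul]; congr 1; omega
      rw [he]; exact pow_orderOf_eq_one α
    have hne7 : α^7 ≠ 1 := by
      intro h
      have hd := orderOf_dvd_of_pow_eq_one h
      rw [h14] at hd
      omega
    have hne2 : α^2 ≠ 1 := by
      intro h
      have hd := orderOf_dvd_of_pow_eq_one h
      rw [h14] at hd
      omega
    exact HeawoodAux.cent ((Commute.refl α).pow_pow 7 2) h2 hne2 (Or.inl h1) hne7
  · intro h21
    have h1 : (α^7)^3 = 1 := by
      have he : (α^7)^3 = α^(orderOf α) := by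
        rw [← pow_mul]; congr 1; omega
      rw [he]; exact pow_orderOf_eq_one α
    have h2 : (α^3)^7 = 1 := by
      have he : (α^3)^7 = α^(orderOf α) := by
        rw [← pow_mul]; congr 1; omega
      rw [he]; exact pow_orderOf_eq_one α
    have hne7 : α^7 ≠ 1 := by
      intro h
      have hd := orderOf_dvd_of_pow_eq_one h
      rw [h21] at hd
      omega
    have hne3 : α^3 ≠ 1 := by
      intro h
      have hd := orderOf_dvd_of_pow_eq_one h
      rw [h21] at hd
      omega
    exact HeawoodAux.cent ((Commute.refl α).pow_pow 7 3) h2 hne3 (Or.inr h1) hne7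
end
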